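/- arXiv:2102.00384 — 11 statements merged into one kernel-verified Lean document; each statement's English description precedes it below -/
import Mathlib

section
/- For every order K ≥ 2 and every dimension d ≥ 1, there exists an order-K tensor Θ ∈ ℝ^{d×⋯×d} such that the CP rank of Θ is at least d, yet for every π ∈ ℝ there exists a tensor of CP rank at most 2 having the same sign pattern as Θ − π (i.e., srank(Θ − π) ≤ 2 for all π ∈ ℝ). -/
open Finset Submodule

/-- The sign function: `sgn y = 1` if `y ≥ 0` and `-1` otherwise. -/
noncomputable def sgn (y : ℝ) : ℝ := if 0 ≤ y then 1 else -1

/-- An order-`|ι|` tensor `T` (with mode `k` of dimension `d k`) has CP rank at most `r`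
if it admits a CP decomposition with `r` rank-one terms. -/
def HasCPRankLE {ι : Type*} [Fintype ι] {d : ι → ℕ} (r : ℕ)
    (T : (∀ k, Fin (d k)) → ℝ) : Prop :=
  ∃ a : Fin r → (∀ k, Fin (d k) → ℝ), ∀ ω, T ω = ∑ s, ∏ k, a s k (ω k)

lemma maxcols_linIndep (d : ℕ) (hd : 1 ≤ d) :
    LinearIndependent ℝ (fun (j : Fin d) (i : Fin d) =>
      ((max (i : ℕ) (j : ℕ) : ℕ) : ℝ) + 1) := by
  rw [Fintype.linearIndependent_iff]
  intro c hc
  -- evaluate the functional equation at each i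
  have hS : ∀ i : Fin d, ∑ j, c j * (((max (i : ℕ) (j : ℕ) : ℕ) : ℝ) + 1) = 0 := by
    intro i
    have := congrFun hc i
    simpa [Finset.sum_apply, mul_comm] using this
  -- partial sums vanish
  have hA : ∀ n : ℕ, n + 1 < d →
      ∑ j ∈ univ.filter (fun j : Fin d => (j : ℕ) ≤ n), c j = 0 := by
    intro n hn
    have h1 : ∑ j : Fin d, c j * (((max (n+1) (j : ℕ) : ℕ) : ℝ) + 1) = 0 := by
      simpa using hS ⟨n + 1, hn⟩
    have h2 : ∑ j : Fin d, c j * (((max n (j : ℕ) : ℕ) : ℝ) + 1) = 0 := by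
      simpa using hS ⟨n, by omega⟩
    have key : ∑ j ∈ univ.filter (fun j : Fin d => (j : ℕ) ≤ n), c j
        = ∑ j : Fin d, (c j * (((max (n+1) (j : ℕ) : ℕ) : ℝ) + 1)
            - c j * (((max n (j : ℕ) : ℕ) : ℝ) + 1)) := by
      rw [Finset.sum_filter]
      refine Finset.sum_congr rfl fun j _ => ?_
      by_cases hj : (j : ℕ) ≤ n
      · rw [if_pos hj, max_eq_left (by omega), max_eq_left hj]
        push_cast; ring
      · rw [if_neg hj, max_eq_right (by omega), max_eq_right (by omega)]
        ring
    rw [key, Finset.sum_sub_distrib, h1, h2, sub_zero]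
  -- all but the last coefficient vanish, by strong induction
  have hsmall : ∀ n : ℕ, ∀ j : Fin d, (j : ℕ) = n → (j : ℕ) + 1 < d → c j = 0 := by
    intro n
    induction n using Nat.strong_induction_on with
    | _ n ih =>
      intro j hj hjd
      have hA' := hA n (by omega)
      have : ∑ j' ∈ univ.filter (fun j' : Fin d => (j' : ℕ) ≤ n), c j' = c j := by
        refine Finset.sum_eq_single_of_mem j (by simp [hj]) ?_
        intro j' hj' hne
        have hle : (j' : ℕ) ≤ n := (Finset.mem_filter.mp hj').2
        have hlt : (j' : ℕ) < n := by
          rcases lt_or_eq_of_le hle with h | h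
          · exact h
          · exact absurd (Fin.ext (h.trans hj.symm)) hne
        exact ih _ hlt j' rfl (by omega)
      rw [this] at hA'
      exact hA'
  -- the last coefficient
  intro j
  by_cases hjd : (j : ℕ) + 1 < d
  · exact hsmall _ j rfl hjd
  · have hjv : (j : ℕ) = d - 1 := by have := j.isLt; omega
    have h1 := hS j
    have : ∑ j', c j' * (((max (j : ℕ) (j' : ℕ) : ℕ) : ℝ) + 1) = c j * d := by
      rw [Finset.sum_eq_single_of_mem j (Finset.mem_univ j) ?_]
      · congr 1
        have h : max (j : ℕ) (j : ℕ) = d - 1 := by omega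
        rw [h, Nat.cast_sub hd]; push_cast; ring
      · intro j' _ hne
        have : (j' : ℕ) + 1 < d := by
          have := j'.isLt
          rcases Nat.lt_or_ge ((j' : ℕ) + 1) d with h | h
          · exact h
          · exact absurd (Fin.ext (by omega : (j' : ℕ) = (j : ℕ))) hne
        rw [hsmall _ j' rfl this, zero_mul]
    rw [this] at h1
    have hd0 : (d : ℝ) ≠ 0 := Nat.cast_ne_zero.mpr (by omega)
    exact (mul_eq_zero.mp h1).resolve_right hd0

/-- for every order `K ≥ 2` and dimension `d ≥ 1` there is an order-`K`
tensor `Θ ∈ ℝ^{d×⋯×d}` of CP rank at least `d` such that for every `π ∈ ℝ` some tensor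
of CP rank at most `2` has the same sign pattern as `Θ - π`. -/
theorem stmt1 (K d : ℕ) (hK : 2 ≤ K) (hd : 1 ≤ d) :
    ∃ Θ : (Fin K → Fin d) → ℝ,
      (∀ r : ℕ, HasCPRankLE (d := fun _ : Fin K => d) r Θ → d ≤ r) ∧
      (∀ π : ℝ, ∃ Z : (Fin K → Fin d) → ℝ,
        HasCPRankLE (d := fun _ : Fin K => d) 2 Z ∧
        ∀ ω, sgn (Z ω) = sgn (Θ ω - π)) := by
  set k0 : Fin K := ⟨0, by omega⟩ with hk0
  set k1 : Fin K := ⟨1, by omega⟩ with hk1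
  refine ⟨fun ω => ((univ.sup fun k => (ω k : ℕ) : ℕ) : ℝ) + 1, ?_, ?_⟩
  · -- rank lower bound
    rintro r ⟨a, ha⟩
    set F : Fin d → Fin d → ℝ := fun j i => ((max (i : ℕ) (j : ℕ) : ℕ) : ℝ) + 1 with hF
    set G : Fin r → Fin d → ℝ := fun s => a s k0 with hG
    have hsup : ∀ i j : Fin d,
        (univ.sup fun k => (((fun k => if k = k0 then i else j) : Fin K → Fin d) k : ℕ))
          = max (i : ℕ) (j : ℕ) := by
      intro i j
      apply le_antisymm
      · apply Finset.sup_le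
        intro k _
        by_cases h : k = k0 <;> simp [h, le_max_left, le_max_right]
      · apply max_le
        · have := Finset.le_sup (f := fun k => (((fun k => if k = k0 then i else j) :
            Fin K → Fin d) k : ℕ)) (Finset.mem_univ k0)
          simpa using this
        · have := Finset.le_sup (f := fun k => (((fun k => if k = k0 then i else j) :
            Fin K → Fin d) k : ℕ)) (Finset.mem_univ k1)
          have hne : k1 ≠ k0 := by simp [hk0, hk1, Fin.ext_iff]
          simpa [hne] using this
    have hmem : ∀ j : Fin d, F j ∈ span ℝ (Set.range G) := by
      intro j
      have hFj : F j = ∑ s, (∏ k ∈ univ.erase k0, a s k j) • G s := by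
        funext i
        have := ha (fun k => if k = k0 then i else j)
        simp only [hsup i j] at this
        rw [hF]
        simp only [this, Finset.sum_apply, Pi.smul_apply, smul_eq_mul, hG]
        refine Finset.sum_congr rfl fun s _ => ?_
        rw [← Finset.mul_prod_erase univ _ (Finset.mem_univ k0)]
        rw [if_pos rfl, mul_comm]
        congr 1
        refine Finset.prod_congr rfl fun k hk => ?_
        rw [if_neg (Finset.ne_of_mem_erase hk)]
      rw [hFj]
      exact Submodule.sum_mem _ fun s _ =>
        Submodule.smul_mem _ _ (Submodule.subset_span (Set.mem_range_self s))
    have h1 : Module.finrank ℝ (span ℝ (Set.range F)) = d := by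
      rw [finrank_span_eq_card (maxcols_linIndep d hd), Fintype.card_fin]
    have h2 : span ℝ (Set.range F) ≤ span ℝ (Set.range G) :=
      Submodule.span_le.mpr (Set.range_subset_iff.mpr hmem)
    have h3 : Module.finrank ℝ (span ℝ (Set.range G)) ≤ r := by
      have := finrank_range_le_card (R := ℝ) G
      simpa [Set.finrank] using this
    calc d = Module.finrank ℝ (span ℝ (Set.range F)) := h1.symm
      _ ≤ Module.finrank ℝ (span ℝ (Set.range G)) := Submodule.finrank_mono h2
      _ ≤ r := h3
  · -- sign rank at most 2
    intro π
    set b : Fin d → ℝ := fun i => if (i : ℝ) < π - 1 then 1 else 0 with hb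
    refine ⟨fun ω => 1 - 2 * ∏ k, b (ω k), ?_, ?_⟩
    · refine ⟨![fun _ _ => 1, fun k i => (if k = k0 then (-2 : ℝ) else 1) * b i], ?_⟩
      intro ω
      rw [Fin.sum_univ_two]
      simp only [Matrix.cons_val_zero, Matrix.cons_val_one, Matrix.head_cons]
      rw [Finset.prod_const_one, Finset.prod_mul_distrib]
      rw [Finset.prod_ite_eq' univ k0 (fun _ => (-2 : ℝ))]
      simp
      ring
    · intro ω
      have hne : Nonempty (Fin K) := ⟨k0⟩
      show sgn (1 - 2 * ∏ k, b (ω k)) = sgn (((univ.sup fun k => (ω k : ℕ) : ℕ) : ℝ) + 1 - π)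
      by_cases hcase : ∀ k, ((ω k : ℕ) : ℝ) < π - 1
      · have hprod : ∏ k, b (ω k) = 1 :=
          Finset.prod_eq_one fun k _ => if_pos (hcase k)
        have hZ : (1 : ℝ) - 2 * ∏ k, b (ω k) = -1 := by rw [hprod]; ring
        obtain ⟨k', -, hk'⟩ := Finset.exists_mem_eq_sup univ
          (Finset.univ_nonempty (α := Fin K)) (fun k => (ω k : ℕ))
        have hΘ : ((univ.sup fun k => (ω k : ℕ) : ℕ) : ℝ) + 1 - π < 0 := by
          rw [hk']
          have := hcase k'
          linarith
        rw [hZ, sgn, sgn, if_neg (by norm_num), if_neg (not_le.mpr hΘ)]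
      · push_neg at hcase
        obtain ⟨k', hk'⟩ := hcase
        have hprod : ∏ k, b (ω k) = 0 :=
          Finset.prod_eq_zero (Finset.mem_univ k') (if_neg (not_lt.mpr hk'))
        have hZ : (1 : ℝ) - 2 * ∏ k, b (ω k) = 1 := by rw [hprod]; ring
        have hΘ : (0:ℝ) ≤ ((univ.sup fun k => (ω k : ℕ) : ℕ) : ℝ) + 1 - π := by
          have hle : (ω k' : ℕ) ≤ univ.sup fun k => (ω k : ℕ) :=
            Finset.le_sup (f := fun k => (ω k : ℕ)) (Finset.mem_univ k')
          have : ((ω k' : ℕ) : ℝ) ≤ ((univ.sup fun k => (ω k : ℕ) : ℕ) : ℝ) :=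
            Nat.cast_le.mpr hle
          linarith
        rw [hZ, sgn, sgn, if_pos (by norm_num), if_pos hΘ]
end

section
/- Fix π ∈ [−1,1]. Let Ω be a finite index set with probability weights {p_ω}, let Θ: Ω → [−1,1], and for each ω let μ_ω be a probability measure on [−1,1] with mean ∫ y dμ_ω(y) = Θ(ω). Define Risk(Z) = Σ_ω p_ω ∫ |y − π| · |sgn(Z(ω)) − sgn(y − π)| dμ_ω(y). Suppose there exists a tensor of CP rank at most r with the same sign pattern as Θ − π. Then for every Θ̄ with the same sign pattern as sgn(Θ − π): (i) Risk(Θ̄) ≤ Risk(Z) for every Z: Ω → ℝ, and (ii) the infimum of Risk(Z) over tensors Z of CP rank at most r equals Risk(Θ̄). -/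
open MeasureTheory

/-- The weighted classification risk at level `π`:
`Risk(Z) = Σ_ω p_ω ∫ |y − π| · |sgn(Z(ω)) − sgn(y − π)| dμ_ω(y)`. -/
noncomputable def Risk {I : Type*} [Fintype I] (p : I → ℝ) (μ : I → Measure ℝ)
    (π : ℝ) (Z : I → ℝ) : ℝ :=
  ∑ ω, p ω * ∫ y, |y - π| * |sgn (Z ω) - sgn (y - π)| ∂(μ ω)

lemma sgn_key (π : ℝ) (z y : ℝ) :
    |y - π| * |sgn z - sgn (y - π)| = |y - π| - sgn z * (y - π) := by
  rcases le_or_gt 0 (y - π) with h | h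
  · rw [abs_of_nonneg h]
    unfold sgn
    rw [if_pos h]
    split_ifs <;> norm_num <;> ring
  · rw [abs_of_neg h]
    unfold sgn
    rw [if_neg (not_le.2 h)]
    split_ifs <;> norm_num <;> ring

lemma sgn_mul_le (s t : ℝ) : sgn s * t ≤ |t| := by
  calc sgn s * t ≤ |sgn s * t| := le_abs_self _
  _ = |sgn s| * |t| := abs_mul _ _
  _ = |t| := by unfold sgn; split_ifs <;> norm_num

lemma sgn_mul_self (t : ℝ) : sgn t * t = |t| := by
  unfold sgn
  split_ifs with h
  · rw [abs_of_nonneg h]; ring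
  · rw [abs_of_neg (lt_of_not_ge h)]; ring

/-- Proposition: global optimum of weighted risk: if some tensor of CP rank
at most `r` has the same sign pattern as `Θ - π`, then any `Θ̄` sign-equivalent to
`sgn(Θ - π)` minimizes the risk over all tensors, and the infimum of the risk over
CP-rank-`≤ r` tensors equals `Risk(Θ̄)`. -/
theorem stmt2 {K : ℕ} {d : Fin K → ℕ} (π : ℝ) (hπ : π ∈ Set.Icc (-1 : ℝ) 1)
    (p : (∀ k, Fin (d k)) → ℝ) (hp0 : ∀ ω, 0 ≤ p ω) (hp1 : ∑ ω, p ω = 1)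
    (Θ : (∀ k, Fin (d k)) → ℝ) (hΘ : ∀ ω, Θ ω ∈ Set.Icc (-1 : ℝ) 1)
    (μ : (∀ k, Fin (d k)) → Measure ℝ)
    (hμ : ∀ ω, IsProbabilityMeasure (μ ω))
    (hsupp : ∀ ω, μ ω (Set.Icc (-1 : ℝ) 1)ᶜ = 0)
    (hmean : ∀ ω, (∫ y, y ∂(μ ω)) = Θ ω)
    (r : ℕ)
    (hsr : ∃ Z : (∀ k, Fin (d k)) → ℝ,
      HasCPRankLE r Z ∧ ∀ ω, sgn (Z ω) = sgn (Θ ω - π))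
    (Θb : (∀ k, Fin (d k)) → ℝ) (hΘb : ∀ ω, sgn (Θb ω) = sgn (Θ ω - π)) :
    (∀ Z : (∀ k, Fin (d k)) → ℝ, Risk p μ π Θb ≤ Risk p μ π Z) ∧
    IsGLB {x : ℝ | ∃ Z : (∀ k, Fin (d k)) → ℝ,
      HasCPRankLE r Z ∧ x = Risk p μ π Z} (Risk p μ π Θb) := by
  -- a.e. membership in [-1,1]
  have hae : ∀ ω, ∀ᵐ y ∂(μ ω), y ∈ Set.Icc (-1 : ℝ) 1 := by
    intro ω
    rw [ae_iff]
    exact hsupp ω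
  -- integrability of id
  have hy_int : ∀ ω, Integrable (fun y : ℝ => y) (μ ω) := by
    intro ω
    have := hμ ω
    refine Integrable.mono' (integrable_const (1 : ℝ))
      measurable_id.aestronglyMeasurable ?_
    filter_upwards [hae ω] with y hy
    rw [Real.norm_eq_abs]
    exact abs_le.2 ⟨hy.1, hy.2⟩
  have hsub_int : ∀ ω, Integrable (fun y : ℝ => y - π) (μ ω) := by
    intro ω
    have := hμ ω
    exact (hy_int ω).sub (integrable_const π)
  have habs_int : ∀ ω, Integrable (fun y : ℝ => |y - π|) (μ ω) :=
    fun ω => (hsub_int ω).abs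
  have hsub_val : ∀ ω, (∫ y, (y - π) ∂(μ ω)) = Θ ω - π := by
    intro ω
    have := hμ ω
    rw [integral_sub (hy_int ω) (integrable_const π), hmean ω, integral_const]
    simp
  -- risk formula
  have risk_eq : ∀ Z : (∀ k, Fin (d k)) → ℝ,
      Risk p μ π Z = ∑ ω, p ω * ((∫ y, |y - π| ∂(μ ω)) - sgn (Z ω) * (Θ ω - π)) := by
    intro Z
    unfold Risk
    refine Finset.sum_congr rfl fun ω _ => ?_
    congr 1
    have : (fun y : ℝ => |y - π| * |sgn (Z ω) - sgn (y - π)|)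
        = fun y : ℝ => |y - π| - sgn (Z ω) * (y - π) :=
      funext fun y => sgn_key π (Z ω) y
    rw [this, integral_sub (habs_int ω) ((hsub_int ω).const_mul _),
      integral_const_mul, hsub_val ω]
  -- part 1
  have part1 : ∀ Z : (∀ k, Fin (d k)) → ℝ, Risk p μ π Θb ≤ Risk p μ π Z := by
    intro Z
    rw [risk_eq Θb, risk_eq Z]
    refine Finset.sum_le_sum fun ω _ => ?_
    refine mul_le_mul_of_nonneg_left (sub_le_sub_left ?_ _) (hp0 ω)
    rw [hΘb ω, sgn_mul_self]
    exact sgn_mul_le _ _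
  refine ⟨part1, ?_, ?_⟩
  · rintro x ⟨Z, _, rfl⟩
    exact part1 Z
  · intro b hb
    obtain ⟨Z0, hZ0r, hZ0s⟩ := hsr
    have heq : Risk p μ π Z0 = Risk p μ π Θb := by
      rw [risk_eq Z0, risk_eq Θb]
      refine Finset.sum_congr rfl fun ω _ => ?_
      rw [hZ0s ω, hΘb ω]
    exact heq ▸ hb ⟨Z0, hZ0r, rfl⟩
end

section
/- Fix π ∈ [−1,1] and constants α > 0, c > 0, ρ > 0. Let Ω be a finite index set with probability weights {p_ω}, let Θ: Ω → [−1,1], and for each ω let μ_ω be a probability measure on [−1,1] with mean Θ(ω). Define Risk(Z) = Σ_ω p_ω ∫ |y − π| · |sgn(Z(ω)) − sgn(y − π)| dμ_ω(y) and MAE(Θ₁,Θ₂) = Σ_ω p_ω |Θ₁(ω) − Θ₂(ω)|. Assume the α-smoothness condition: Σ_{ω: |Θ(ω)−π| ≤ t} p_ω ≤ c·t^α for all 0 ≤ t < ρ. Then there exists a constant C > 0, depending only on α, c and ρ (not on Z), such that for every Θ̄ with the same sign pattern as sgn(Θ − π) and every Z: Ω → ℝ, MAE(sgn Z, sgn Θ̄)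 ≤ C·[Risk(Z) − Risk(Θ̄)]^{α/(α+1)}. -/
open MeasureTheory

/-- The mean absolute error `MAE(Θ₁,Θ₂) = Σ_ω p_ω |Θ₁(ω) − Θ₂(ω)|`. -/
noncomputable def MAE {I : Type*} [Fintype I] (p : I → ℝ) (A B : I → ℝ) : ℝ :=
  ∑ ω, p ω * |A ω - B ω|

lemma sgn_of_nonneg {x : ℝ} (h : 0 ≤ x) : sgn x = 1 := if_pos h
lemma sgn_of_neg {x : ℝ} (h : x < 0) : sgn x = -1 := if_neg (not_le.2 h)

lemma key_pointwise (a x : ℝ) : |x| * |sgn a - sgn x| = |x| - sgn a * x := by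
  rcases le_or_gt 0 x with hx | hx <;> rcases le_or_gt 0 a with ha | ha <;>
    first
    | rw [sgn_of_nonneg hx, sgn_of_nonneg ha]
    | rw [sgn_of_nonneg hx, sgn_of_neg ha]
    | rw [sgn_of_neg hx, sgn_of_nonneg ha]
    | rw [sgn_of_neg hx, sgn_of_neg ha]
  all_goals rcases abs_cases x with ⟨h1, h2⟩ | ⟨h1, h2⟩ <;> rw [h1] <;> norm_num <;> linarith

lemma sgn_diff_eq (a b x : ℝ) (hb : sgn b = sgn x) :
    (sgn b - sgn a) * x = |sgn a - sgn b| * |x| := by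
  rw [hb]
  rcases le_or_gt 0 x with hx | hx <;> rcases le_or_gt 0 a with ha | ha <;>
    first
    | rw [sgn_of_nonneg hx, sgn_of_nonneg ha]
    | rw [sgn_of_nonneg hx, sgn_of_neg ha]
    | rw [sgn_of_neg hx, sgn_of_nonneg ha]
    | rw [sgn_of_neg hx, sgn_of_neg ha]
  all_goals rcases abs_cases x with ⟨h1, h2⟩ | ⟨h1, h2⟩ <;> rw [h1] <;> norm_num <;> linarith

lemma abs_sgn_le (x : ℝ) : |sgn x| ≤ 1 := by
  unfold sgn; split_ifs <;> norm_num

lemma risk_integral (π a : ℝ) (μ : Measure ℝ) [IsProbabilityMeasure μ]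
    (hsupp : μ (Set.Icc (-1:ℝ) 1)ᶜ = 0) :
    ∫ y, |y - π| * |sgn a - sgn (y - π)| ∂μ
      = (∫ y, |y - π| ∂μ) - sgn a * ((∫ y, y ∂μ) - π) := by
  have hae : ∀ᵐ y ∂μ, y ∈ Set.Icc (-1:ℝ) 1 := by
    have : {y : ℝ | ¬ y ∈ Set.Icc (-1:ℝ) 1} = (Set.Icc (-1:ℝ) 1)ᶜ := rfl
    rw [ae_iff, this, hsupp]
  have h1 : Integrable (fun y => y) μ := by
    refine Integrable.mono' (integrable_const 1) measurable_id.aestronglyMeasurable ?_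
    filter_upwards [hae] with y hy
    simpa [Real.norm_eq_abs, abs_le] using hy
  have h1' : Integrable (fun y => y - π) μ := h1.sub (integrable_const π)
  have h2 : Integrable (fun y => |y - π|) μ := h1'.abs
  calc ∫ y, |y - π| * |sgn a - sgn (y - π)| ∂μ
      = ∫ y, (|y - π| - sgn a * (y - π)) ∂μ := by
        congr 1; funext y; exact key_pointwise a (y - π)
    _ = (∫ y, |y - π| ∂μ) - sgn a * ∫ y, (y - π) ∂μ := by
        rw [integral_sub h2 (h1'.const_mul _), integral_const_mul]
    _ = (∫ y, |y - π| ∂μ) - sgn a * ((∫ y, y ∂μ) - π) := by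
        rw [integral_sub h1 (integrable_const π), integral_const]; simp

/-- Theorem: identifiability: under the `α`-smoothness condition at level
`π` there is a constant `C > 0`, depending only on `α`, `c` and `ρ`, such that
`MAE(sgn Z, sgn Θ̄) ≤ C·[Risk(Z) − Risk(Θ̄)]^{α/(α+1)}` for every `Θ̄` sign-equivalent to
`sgn(Θ − π)` and every tensor `Z`. -/
theorem stmt4 (α c ρ : ℝ) (hα : 0 < α) (hc : 0 < c) (hρ : 0 < ρ) :
    ∃ C : ℝ, 0 < C ∧
      ∀ (π : ℝ), π ∈ Set.Icc (-1 : ℝ) 1 →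
      ∀ (I : Type) [Fintype I],
      ∀ (p Θ : I → ℝ) (μ : I → Measure ℝ),
        (∀ ω, 0 ≤ p ω) → (∑ ω, p ω) = 1 →
        (∀ ω, Θ ω ∈ Set.Icc (-1 : ℝ) 1) →
        (∀ ω, IsProbabilityMeasure (μ ω)) →
        (∀ ω, μ ω (Set.Icc (-1 : ℝ) 1)ᶜ = 0) →
        (∀ ω, (∫ y, y ∂(μ ω)) = Θ ω) →
        (∀ t : ℝ, 0 ≤ t → t < ρ →
          (∑ ω ∈ Finset.univ.filter (fun ω => |Θ ω - π| ≤ t), p ω) ≤ c * t ^ α) →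
        ∀ Θb Z : I → ℝ, (∀ ω, sgn (Θb ω) = sgn (Θ ω - π)) →
          MAE p (fun ω => sgn (Z ω)) (fun ω => sgn (Θb ω))
            ≤ C * (Risk p μ π Z - Risk p μ π Θb) ^ (α / (α + 1)) := by
  have hα1 : (0:ℝ) < α + 1 := by linarith
  have hρα : (0:ℝ) ≤ (2/ρ) ^ α := Real.rpow_nonneg (by positivity) α
  refine ⟨2*c + 1 + 2*(2/ρ)^α, by nlinarith, ?_⟩
  intro π hπ I _ p Θ μ hp hpsum hΘ hprob hsupp hmean hsmooth Θb Z hsg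
  have hβpos : 0 < α / (α + 1) := div_pos hα hα1
  have hq0 : ∀ ω, (0:ℝ) ≤ |sgn (Z ω) - sgn (Θb ω)| := fun ω => abs_nonneg _
  have hq2 : ∀ ω, |sgn (Z ω) - sgn (Θb ω)| ≤ 2 := by
    intro ω
    calc |sgn (Z ω) - sgn (Θb ω)| ≤ |sgn (Z ω)| + |sgn (Θb ω)| := abs_sub _ _
      _ ≤ 2 := by linarith [abs_sgn_le (Z ω), abs_sgn_le (Θb ω)]
  -- the excess risk
  have hRisk : Risk p μ π Z - Risk p μ π Θb
      = ∑ ω, p ω * (|sgn (Z ω) - sgn (Θb ω)| * |Θ ω - π|) := by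
    rw [Risk, Risk, ← Finset.sum_sub_distrib]
    apply Finset.sum_congr rfl
    intro ω _
    haveI := hprob ω
    rw [risk_integral π (Z ω) (μ ω) (hsupp ω), risk_integral π (Θb ω) (μ ω) (hsupp ω),
      hmean ω, ← mul_sub]
    have h := sgn_diff_eq (Z ω) (Θb ω) (Θ ω - π) (hsg ω)
    congr 1
    linarith [h]
  set E := ∑ ω, p ω * (|sgn (Z ω) - sgn (Θb ω)| * |Θ ω - π|) with hEdef
  have hE0 : 0 ≤ E :=
    Finset.sum_nonneg fun ω _ => mul_nonneg (hp ω) (mul_nonneg (hq0 ω) (abs_nonneg _))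
  have hMAE : MAE p (fun ω => sgn (Z ω)) (fun ω => sgn (Θb ω))
      = ∑ ω, p ω * |sgn (Z ω) - sgn (Θb ω)| := rfl
  rw [hMAE, hRisk]
  have hMle : (∑ ω, p ω * |sgn (Z ω) - sgn (Θb ω)|) ≤ 2 := by
    calc ∑ ω, p ω * |sgn (Z ω) - sgn (Θb ω)| ≤ ∑ ω, p ω * 2 :=
          Finset.sum_le_sum (fun ω _ => mul_le_mul_of_nonneg_left (hq2 ω) (hp ω))
      _ = 2 := by rw [← Finset.sum_mul, hpsum, one_mul]
  -- key comparison bound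
  have hkey : ∀ t : ℝ, 0 < t → t < ρ →
      (∑ ω, p ω * |sgn (Z ω) - sgn (Θb ω)|) ≤ 2 * (c * t ^ α) + E / t := by
    intro t ht htρ
    rw [← Finset.sum_filter_add_sum_filter_not Finset.univ (fun ω => |Θ ω - π| ≤ t)
      (fun ω => p ω * |sgn (Z ω) - sgn (Θb ω)|)]
    have hA : (∑ ω ∈ Finset.univ.filter (fun ω => |Θ ω - π| ≤ t),
        p ω * |sgn (Z ω) - sgn (Θb ω)|) ≤ 2 * (c * t ^ α) := by
      calc (∑ ω ∈ Finset.univ.filter (fun ω => |Θ ω - π| ≤ t),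
            p ω * |sgn (Z ω) - sgn (Θb ω)|)
          ≤ ∑ ω ∈ Finset.univ.filter (fun ω => |Θ ω - π| ≤ t), 2 * p ω :=
            Finset.sum_le_sum (fun ω _ => by nlinarith [hp ω, hq2 ω, hq0 ω])
        _ = 2 * ∑ ω ∈ Finset.univ.filter (fun ω => |Θ ω - π| ≤ t), p ω :=
            (Finset.mul_sum _ _ _).symm
        _ ≤ 2 * (c * t ^ α) := by linarith [hsmooth t ht.le htρ]
    have hB : (∑ ω ∈ Finset.univ.filter (fun ω => ¬ |Θ ω - π| ≤ t),
        p ω * |sgn (Z ω) - sgn (Θb ω)|) ≤ E / t := by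
      rw [le_div_iff₀ ht]
      calc (∑ ω ∈ Finset.univ.filter (fun ω => ¬ |Θ ω - π| ≤ t),
            p ω * |sgn (Z ω) - sgn (Θb ω)|) * t
          = ∑ ω ∈ Finset.univ.filter (fun ω => ¬ |Θ ω - π| ≤ t),
            p ω * |sgn (Z ω) - sgn (Θb ω)| * t := Finset.sum_mul _ _ _
        _ ≤ ∑ ω ∈ Finset.univ.filter (fun ω => ¬ |Θ ω - π| ≤ t),
            p ω * (|sgn (Z ω) - sgn (Θb ω)| * |Θ ω - π|) := by
            refine Finset.sum_le_sum (fun ω hω => ?_)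
            have hlt : t < |Θ ω - π| := not_le.1 (Finset.mem_filter.1 hω).2
            have := mul_le_mul_of_nonneg_left hlt.le (mul_nonneg (hp ω) (hq0 ω))
            nlinarith [this]
        _ ≤ E := Finset.sum_le_sum_of_subset_of_nonneg (Finset.filter_subset _ _)
            (fun ω _ _ => mul_nonneg (hp ω) (mul_nonneg (hq0 ω) (abs_nonneg _)))
    linarith
  rcases eq_or_lt_of_le hE0 with hE | hE
  · -- E = 0
    have hz : ∀ ω, p ω * |sgn (Z ω) - sgn (Θb ω)| = 0 := by
      intro ω
      have h0 : p ω * (|sgn (Z ω) - sgn (Θb ω)| * |Θ ω - π|) = 0 :=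
        (Finset.sum_eq_zero_iff_of_nonneg (fun ω' _ =>
          mul_nonneg (hp ω') (mul_nonneg (hq0 ω') (abs_nonneg _)))).1 hE.symm ω
          (Finset.mem_univ ω)
      by_cases hr : Θ ω - π = 0
      · have hsm := hsmooth 0 le_rfl hρ
        rw [Real.zero_rpow hα.ne', mul_zero] at hsm
        have hmem : ω ∈ Finset.univ.filter (fun ω' => |Θ ω' - π| ≤ 0) := by
          simp [hr]
        have hpω : p ω ≤ ∑ ω' ∈ Finset.univ.filter (fun ω' => |Θ ω' - π| ≤ 0), p ω' :=
          Finset.single_le_sum (fun i _ => hp i) hmem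
        have : p ω = 0 := le_antisymm (by linarith) (hp ω)
        rw [this, zero_mul]
      · have hr' : |Θ ω - π| ≠ 0 := abs_ne_zero.2 hr
        rcases mul_eq_zero.1 h0 with h | h
        · rw [h, zero_mul]
        · rcases mul_eq_zero.1 h with h' | h'
          · rw [h', mul_zero]
          · exact absurd h' hr'
    rw [Finset.sum_eq_zero (fun ω _ => hz ω), ← hE, Real.zero_rpow hβpos.ne', mul_zero]
  · -- E > 0
    have hEβ : 0 < E ^ (α / (α + 1)) := Real.rpow_pos_of_pos hE _
    have hEγ : 0 < E ^ ((1:ℝ) / (α + 1)) := Real.rpow_pos_of_pos hE _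
    have e1 : (E ^ ((1:ℝ)/(α+1))) ^ α = E ^ (α / (α + 1)) := by
      rw [← Real.rpow_mul hE0]
      congr 1
      field_simp
    have e2 : E / E ^ ((1:ℝ)/(α+1)) = E ^ (α / (α + 1)) := by
      have h := Real.rpow_sub hE 1 ((1:ℝ)/(α+1))
      rw [Real.rpow_one] at h
      rw [← h]
      congr 1
      field_simp
      ring
    rcases le_or_gt (E ^ ((1:ℝ)/(α+1))) (ρ/2) with hcase | hcase
    · have hb := hkey _ hEγ (by linarith)
      calc (∑ ω, p ω * |sgn (Z ω) - sgn (Θb ω)|)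
          ≤ 2 * (c * (E ^ ((1:ℝ)/(α+1))) ^ α) + E / E ^ ((1:ℝ)/(α+1)) := hb
        _ = (2*c+1) * E ^ (α/(α+1)) := by rw [e1, e2]; ring
        _ ≤ (2*c + 1 + 2*(2/ρ)^α) * E ^ (α/(α+1)) := by nlinarith [hEβ.le]
    · have hEge : (ρ/2)^α ≤ E ^ (α/(α+1)) := by
        rw [← e1]; exact Real.rpow_le_rpow (by linarith) hcase.le hα.le
      have hmul : (2/ρ)^α * (ρ/2)^α = 1 := by
        rw [← Real.mul_rpow (by positivity) (by positivity),
          show (2/ρ) * (ρ/2) = 1 by field_simp, Real.one_rpow]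
      have h1 := mul_le_mul_of_nonneg_left hEge hρα
      calc (∑ ω, p ω * |sgn (Z ω) - sgn (Θb ω)|) ≤ 2 := hMle
        _ ≤ 2*(2/ρ)^α * E ^ (α/(α+1)) := by nlinarith
        _ ≤ (2*c + 1 + 2*(2/ρ)^α) * E ^ (α/(α+1)) := by nlinarith [hEβ.le, hc]
end

section
/- Fix π ∈ [−1,1] and ρ > 0. Let Ω be a finite index set with probability weights {p_ω}, let Θ: Ω → [−1,1], and for each ω let μ_ω be a probability measure on [−1,1] with mean Θ(ω). Define Risk(Z) = Σ_ω p_ω ∫ |y − π| · |sgn(Z(ω)) − sgn(y − π)| dμ_ω(y) and MAE(Θ₁,Θ₂) = Σ_ω p_ω |Θ₁(ω) − Θ₂(ω)|. Assume that Σ_{ω: |Θ(ω)−π| ≤ t} p_ω = 0 for every 0 ≤ t < ρ (the α = ∞ smoothness case). Then for Θ̄ = sgn(Θ − π) and every Z: Ω → ℝ, Risk(Z) − Risk(Θ̄) ≥ (ρ/2) · MAE(sgn Z, sgn Θ̄). -/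
open MeasureTheory

lemma sgn_sgn (x : ℝ) : sgn (sgn x) = sgn x := by
  unfold sgn; split <;> norm_num

lemma key (c x : ℝ) : |x| * |sgn c - sgn x| = |x| - sgn c * x := by
  unfold sgn
  rcases le_or_gt 0 c with hc | hc <;> rcases le_or_gt 0 x with hx | hx
  · simp [hc, hx, abs_of_nonneg hx]
  · rw [if_pos hc, if_neg (not_le.mpr hx), abs_of_neg hx]
    norm_num; ring
  · rw [if_neg (not_le.mpr hc), if_pos hx, abs_of_nonneg hx]
    norm_num; ring
  · rw [if_neg (not_le.mpr hc), if_neg (not_le.mpr hx), abs_of_neg hx]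
    norm_num

lemma key2 (c x : ℝ) : (sgn x - sgn c) * x = |x| * |sgn c - sgn x| := by
  rw [key]
  have : sgn x * x = |x| := by
    unfold sgn
    rcases le_or_gt 0 x with hx | hx
    · simp [hx, abs_of_nonneg hx]
    · simp [not_le.mpr hx, abs_of_neg hx]
  nlinarith [this]

lemma risk_int (μ : Measure ℝ) [IsProbabilityMeasure μ]
    (hs : μ (Set.Icc (-1:ℝ) 1)ᶜ = 0) (π c : ℝ) :
    ∫ y, |y - π| * |sgn c - sgn (y - π)| ∂μ
      = (∫ y, |y - π| ∂μ) - sgn c * ((∫ y, y ∂μ) - π) := by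
  have hae : ∀ᵐ y ∂μ, y ∈ Set.Icc (-1:ℝ) 1 := by
    have h2 : Set.Icc (-1:ℝ) 1 ∈ ae μ := by simpa using compl_mem_ae_iff.mpr hs
    exact h2
  have hint2 : Integrable (fun y : ℝ => y) μ := by
    refine Integrable.mono' (integrable_const 2) measurable_id.aestronglyMeasurable ?_
    filter_upwards [hae] with y hy
    rw [Real.norm_eq_abs, abs_le]
    constructor <;> [linarith [hy.1]; linarith [hy.2]]
  have hint1 : Integrable (fun y : ℝ => |y - π|) μ :=
    ((hint2.sub (integrable_const π)).abs)
  have hint3 : Integrable (fun y : ℝ => y - π) μ := hint2.sub (integrable_const π)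
  calc ∫ y, |y - π| * |sgn c - sgn (y - π)| ∂μ
      = ∫ y, (|y - π| - sgn c * (y - π)) ∂μ := by
        refine integral_congr_ae (Filter.Eventually.of_forall fun y => ?_)
        exact key c (y - π)
    _ = (∫ y, |y - π| ∂μ) - sgn c * ∫ y, (y - π) ∂μ := by
        rw [integral_sub hint1 (hint3.const_mul _), MeasureTheory.integral_const_mul]
    _ = (∫ y, |y - π| ∂μ) - sgn c * ((∫ y, y ∂μ) - π) := by
        rw [integral_sub hint2 (integrable_const π), integral_const]
        simp

/-- the `α = ∞` smoothness case: if no `p`-mass lies within distance `t < ρ`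
of the level `π`, then `Risk(Z) − Risk(Θ̄) ≥ (ρ/2)·MAE(sgn Z, sgn Θ̄)` where
`Θ̄ = sgn(Θ − π)`. -/
theorem stmt5 {Ω : Type*} [Fintype Ω] (π : ℝ) (hπ : π ∈ Set.Icc (-1 : ℝ) 1) (ρ : ℝ)
    (hρ : 0 < ρ)
    (p : Ω → ℝ) (hp0 : ∀ ω, 0 ≤ p ω) (hp1 : ∑ ω, p ω = 1)
    (Θ : Ω → ℝ) (hΘ : ∀ ω, Θ ω ∈ Set.Icc (-1 : ℝ) 1)
    (μ : Ω → Measure ℝ)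
    (hμ : ∀ ω, IsProbabilityMeasure (μ ω))
    (hsupp : ∀ ω, μ ω (Set.Icc (-1 : ℝ) 1)ᶜ = 0)
    (hmean : ∀ ω, (∫ y, y ∂(μ ω)) = Θ ω)
    (hsmooth : ∀ t : ℝ, 0 ≤ t → t < ρ →
      (∑ ω ∈ Finset.univ.filter (fun ω => |Θ ω - π| ≤ t), p ω) = 0)
    (Z : Ω → ℝ) :
    (ρ / 2) * MAE p (fun ω => sgn (Z ω)) (fun ω => sgn (sgn (Θ ω - π)))
      ≤ Risk p μ π Z - Risk p μ π (fun ω => sgn (Θ ω - π)) := by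
  have hbig : ∀ ω, p ω ≠ 0 → ρ ≤ |Θ ω - π| := by
    intro ω hω
    by_contra h
    push_neg at h
    have h0 := hsmooth |Θ ω - π| (abs_nonneg _) h
    have hmem : ω ∈ Finset.univ.filter (fun ω' => |Θ ω' - π| ≤ |Θ ω - π|) :=
      Finset.mem_filter.mpr ⟨Finset.mem_univ _, le_refl _⟩
    exact hω ((Finset.sum_eq_zero_iff_of_nonneg (fun i _ => hp0 i)).mp h0 ω hmem)
  unfold Risk MAE
  rw [Finset.mul_sum, ← Finset.sum_sub_distrib]
  refine Finset.sum_le_sum fun ω _ => ?_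
  haveI := hμ ω
  rw [risk_int (μ ω) (hsupp ω) π (Z ω), risk_int (μ ω) (hsupp ω) π (sgn (Θ ω - π)),
    hmean ω]
  simp only [sgn_sgn]
  have hk := key2 (Z ω) (Θ ω - π)
  rcases eq_or_ne (p ω) 0 with h0 | h0
  · simp [h0]
  · have hb := hbig ω h0
    nlinarith [hk, hb, hp0 ω, abs_nonneg (sgn (Z ω) - sgn (Θ ω - π)),
      mul_nonneg (hp0 ω) (abs_nonneg (sgn (Z ω) - sgn (Θ ω - π))),
      mul_le_mul_of_nonneg_right (mul_le_mul_of_nonneg_left hb (hp0 ω))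
        (abs_nonneg (sgn (Z ω) - sgn (Θ ω - π)))]
end

section
/- For every d ≥ 1, the d×d real matrix M with entries M(i,j) = log(1 + max(i,j)/d) for i,j ∈ {1,…,d} has rank d (i.e., M is invertible). -/
open Finset

lemma tel (f : ℕ → ℝ) (m : ℕ) : ∀ n, m ≤ n →
    ∑ k ∈ Finset.Ico m n, (f k - f (k+1)) = f m - f n := by
  intro n
  induction n with
  | zero => intro h; simp [Nat.le_zero.mp h]
  | succ n ih =>
    intro h
    rcases Nat.lt_or_ge m (n+1) with h' | h'
    · have hm : m ≤ n := Nat.lt_succ_iff.mp h'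
      rw [Finset.sum_Ico_succ_top hm, ih hm]; ring
    · have : m = n + 1 := le_antisymm h h'
      simp [this]

/-- the `d×d` matrix with entries `M(i,j) = log(1 + max(i,j)/d)`
(for `i, j ∈ {1,…,d}`) has full rank `d`, i.e. it is invertible. -/
theorem stmt8 (d : ℕ) (hd : 1 ≤ d) (M : Matrix (Fin d) (Fin d) ℝ)
    (hM : ∀ i j : Fin d,
      M i j = Real.log (1 + ((max (i.val + 1) (j.val + 1) : ℕ) : ℝ) / (d : ℝ))) :
    M.rank = d ∧ IsUnit M := by
  have hd0 : (0:ℝ) < d := by exact_mod_cast hd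
  set f : ℕ → ℝ := fun k => if k < d then Real.log (1 + ((k:ℝ)+1)/d) else 0 with hf
  set V : Matrix (Fin d) (Fin d) ℝ := Matrix.of (fun i k : Fin d => if i ≤ k then (1:ℝ) else 0) with hV
  set D : Matrix (Fin d) (Fin d) ℝ := Matrix.diagonal (fun k : Fin d => f k - f (k+1)) with hD
  -- key factorization
  have key : M = V * D * V.transpose := by
    ext i j
    rw [hM]
    have hVD : V * D = Matrix.of (fun a b : Fin d => (if a ≤ b then (1:ℝ) else 0) * (f b - f (b+1))) := by
      ext a b
      simp [hV, hD, Matrix.mul_diagonal]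
    have h1 : (V * D * V.transpose) i j
        = ∑ k : Fin d, (if i ≤ k then (1:ℝ) else 0) * (f k - f (k+1)) * (if j ≤ k then (1:ℝ) else 0) := by
      rw [hVD]
      simp only [hV, Matrix.mul_apply, Matrix.transpose_apply, Matrix.of_apply]
    rw [h1]
    set m := max i.val j.val with hm
    have step : ∀ k : Fin d,
        (if i ≤ k then (1:ℝ) else 0) * (f k - f (k+1)) * (if j ≤ k then (1:ℝ) else 0)
        = if m ≤ k.val then f k - f (k+1) else 0 := by
      intro k
      rcases le_or_gt m k.val with h | h
      · have hi : i ≤ k := by rw [Fin.le_def]; omega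
        have hj : j ≤ k := by rw [Fin.le_def]; omega
        simp [hi, hj, h]
      · have hmk : ¬ (m ≤ k.val) := not_le_of_gt h
        have : ¬ (i ≤ k) ∨ ¬ (j ≤ k) := by
          rw [Fin.le_def, Fin.le_def]; omega
        rcases this with h' | h' <;> simp [h', hmk]
    simp_rw [step]
    have hmd : m < d := by rw [hm]; exact max_lt i.isLt j.isLt
    have hsum : (∑ k : Fin d, if m ≤ k.val then f k - f (k+1) else 0)
        = ∑ k ∈ Finset.Ico m d, (f k - f (k+1)) := by
      rw [Fin.sum_univ_eq_sum_range (fun k => if m ≤ k then f k - f (k+1) else 0) d]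
      have hIco : Finset.Ico m d = (Finset.range d).filter (fun k => m ≤ k) := by
        ext k; simp [Finset.mem_Ico]; omega
      rw [hIco, Finset.sum_filter]
    rw [hsum, tel f m d (le_of_lt hmd)]
    have hfm : f m = Real.log (1 + ((m:ℝ)+1)/d) := by simp [hf, hmd]
    have hfd : f d = 0 := by simp [hf]
    have hmax : max (i.val + 1) (j.val + 1) = m + 1 := by omega
    have hcast : ((max (i.val + 1) (j.val + 1) : ℕ) : ℝ) = (m:ℝ) + 1 := by
      rw [hmax]; push_cast; ring
    rw [hfm, hfd, sub_zero, hcast]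
  -- determinant computation
  have hVdet : V.det = 1 := by
    have hbt : V.BlockTriangular id := by
      intro a b hab
      simp only [hV, Matrix.of_apply]
      rw [if_neg]
      exact not_le_of_gt hab
    rw [Matrix.det_of_upperTriangular hbt]
    simp [hV]
  have hDdet : D.det ≠ 0 := by
    rw [hD, Matrix.det_diagonal]
    apply Finset.prod_ne_zero_iff.mpr
    intro k _
    rcases Nat.lt_or_ge (k.val + 1) d with h | h
    · have hk : k.val < d := k.isLt
      have : f k < f (k+1) := by
        simp only [hf, if_pos hk, if_pos h]
        apply Real.log_lt_log
        · positivity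
        · push_cast
          gcongr; linarith
      exact sub_ne_zero_of_ne (ne_of_lt this)
    · have hk1 : ¬ (k.val + 1 < d) := not_lt_of_ge h
      have hkl : k.val < d := k.isLt
      have hfk : f k = Real.log 2 := by
        simp only [hf, if_pos hkl]
        have h2 : ((k.val:ℝ)+1)/d = 1 := by
          rw [div_eq_one_iff_eq (ne_of_gt hd0)]
          have : k.val + 1 = d := by omega
          exact_mod_cast congrArg (Nat.cast : ℕ → ℝ) this
        rw [h2]; norm_num
      have hfk1 : f (k.val+1) = 0 := by simp [hf, hk1]
      rw [hfk, hfk1, sub_zero]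
      exact Real.log_ne_zero_of_pos_of_ne_one (by norm_num) (by norm_num)
  have hMdet : M.det ≠ 0 := by
    rw [key, Matrix.det_mul, Matrix.det_mul, Matrix.det_transpose, hVdet]
    simpa using hDdet
  have hUnit : IsUnit M := (Matrix.isUnit_iff_isUnit_det M).mpr (isUnit_iff_ne_zero.mpr hMdet)
  exact ⟨by rw [Matrix.rank_of_isUnit M hUnit]; simp, hUnit⟩
end

section
/- Let K ≥ 2 and d ≥ 1, and let Θ be the order-K tensor with entries Θ(i₁,…,i_K) = log(1 + max(i₁,…,i_K)/d) for (i₁,…,i_K) ∈ {1,…,d}^K. Then for every π ∈ ℝ there exists a tensor of CP rank at most 2 having the same sign pattern as Θ − π; that is, srank(Θ − π) ≤ 2 for all π ∈ ℝ. -/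
lemma log_mono_aux (d : ℕ) (hd : 1 ≤ d) {a b : ℕ} (hab : a ≤ b) :
    Real.log (1 + (a : ℝ) / d) ≤ Real.log (1 + (b : ℝ) / d) := by
  have hdpos : (0:ℝ) < d := by exact_mod_cast hd
  apply Real.log_le_log
  · positivity
  · have : (a:ℝ) / d ≤ (b:ℝ) / d := by
      gcongr
    linarith

/-- max hypergraphon: for the order-`K` tensor with entries
`Θ(i₁,…,i_K) = log(1 + max(i₁,…,i_K)/d)` on `{1,…,d}^K`, every level shift `Θ − π` has
the same sign pattern as some tensor of CP rank at most `2`, i.e. `srank(Θ − π) ≤ 2`. -/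
theorem stmt9 (K d : ℕ) (hK : 2 ≤ K) (hd : 1 ≤ d)
    (Θ : (Fin K → Fin d) → ℝ)
    (hΘ : ∀ ω, Θ ω =
      Real.log (1 + ((Finset.univ.sup (fun k : Fin K => (ω k).val + 1) : ℕ) : ℝ) / (d : ℝ)))
    (π : ℝ) :
    ∃ Z : (Fin K → Fin d) → ℝ,
      HasCPRankLE (d := fun _ : Fin K => d) 2 Z ∧
      ∀ ω, sgn (Z ω) = sgn (Θ ω - π) := by
  have hKpos : 0 < K := by omega
  haveI : NeZero K := ⟨by omega⟩
  set g : Fin d → ℝ := fun i =>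
    if Real.log (1 + ((i.val + 1 : ℕ) : ℝ) / d) < π then 1 else 0 with hg
  refine ⟨fun ω => 1 - 2 * ∏ k, g (ω k), ?_, ?_⟩
  · refine ⟨![fun _ _ => 1, fun k i => if k = 0 then -2 * g i else g i], ?_⟩
    intro ω
    rw [Fin.sum_univ_two]
    simp only [Matrix.cons_val_zero, Matrix.cons_val_one, Matrix.head_cons]
    have h1 : (∏ k : Fin K, (1:ℝ)) = 1 := by simp
    have h2 : (∏ k : Fin K, (if k = 0 then -2 * g (ω k) else g (ω k)))
        = (∏ k : Fin K, (if k = (0 : Fin K) then (-2:ℝ) else 1)) * ∏ k, g (ω k) := by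
      rw [← Finset.prod_mul_distrib]
      apply Finset.prod_congr rfl
      intro k _
      by_cases hk : k = 0 <;> simp [hk]
    have h3 : (∏ k : Fin K, (if k = (0 : Fin K) then (-2:ℝ) else 1)) = -2 := by
      rw [Finset.prod_ite_eq' Finset.univ (0 : Fin K) (fun _ => (-2:ℝ))]
      simp
    rw [h1, h2, h3]; ring
  · intro ω
    set m : ℕ := Finset.univ.sup (fun k : Fin K => (ω k).val + 1) with hm
    have hmax : Real.log (1 + (m:ℝ)/d) < π ↔
        ∀ k, Real.log (1 + (((ω k).val + 1 : ℕ):ℝ)/d) < π := by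
      constructor
      · intro h k
        refine lt_of_le_of_lt (log_mono_aux d hd ?_) h
        exact Finset.le_sup (f := fun k : Fin K => (ω k).val + 1) (Finset.mem_univ k)
      · intro h
        obtain ⟨k, _, hk⟩ := Finset.exists_mem_eq_sup (Finset.univ (α := Fin K))
          Finset.univ_nonempty (fun k : Fin K => (ω k).val + 1)
        rw [hm, hk]; exact h k
    by_cases hcase : Real.log (1 + (m:ℝ)/d) < π
    · have hprod : (∏ k, g (ω k)) = 1 := by
        apply Finset.prod_eq_one
        intro k _
        simp only [hg]
        rw [if_pos (hmax.mp hcase k)]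
      simp only [hprod]
      have hz : (1:ℝ) - 2 * 1 = -1 := by ring
      rw [hz, hΘ ω, ← hm]
      unfold sgn
      rw [if_neg (by linarith), if_neg (by linarith)]
    · have : ∃ k, ¬ Real.log (1 + (((ω k).val + 1 : ℕ):ℝ)/d) < π := by
        by_contra h
        push_neg at h
        exact hcase (hmax.mpr fun k => h k)
      obtain ⟨k0, hk0⟩ := this
      have hprod : (∏ k, g (ω k)) = 0 := by
        apply Finset.prod_eq_zero (Finset.mem_univ k0)
        simp only [hg]
        rw [if_neg hk0]
      simp only [hprod]
      have hz : (1:ℝ) - 2 * 0 = 1 := by ring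
      rw [hz, hΘ ω, ← hm]
      push_neg at hcase
      unfold sgn
      rw [if_pos (by norm_num), if_pos (by linarith)]
end

section
/- Let x^{(k)}_{i_k} ∈ [0,1] be given numbers for i_k ∈ {1,…,d_k}, k ∈ {1,…,K}, and let Z_max be the order-K tensor with entries Z_max(i₁,…,i_K) = max(x^{(1)}_{i₁},…,x^{(K)}_{i_K}). Let g: ℝ → ℝ be continuous, fix π ∈ ℝ, and suppose the set {z ∈ ℝ : g(z) = π} has at most r elements for some r ≥ 1. Let Θ = g(Z_max) entrywise. Then there exists a tensor of CP rank at most 2r having the same sign pattern as Θ − π; that is, srank(Θ − π) ≤ 2r. -/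
namespace Stmt10
open scoped Classical
set_option linter.unusedSectionVars false

lemma sgn_of_nonneg {y : ℝ} (h : 0 ≤ y) : sgn y = 1 := if_pos h
lemma sgn_of_neg {y : ℝ} (h : y < 0) : sgn y = -1 := if_neg (not_le.2 h)
lemma sgn_one : sgn 1 = 1 := sgn_of_nonneg zero_le_one
lemma sgn_zero : sgn 0 = 1 := sgn_of_nonneg le_rfl
lemma sgn_neg_one : sgn (-1) = -1 := sgn_of_neg (by norm_num)

variable {ι : Type*} [Fintype ι] [Nonempty ι] {d : ι → ℕ}

/-- sum of `p` rank-one tensors -/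
def cpSum {p : ℕ} (a : Fin p → ∀ k, Fin (d k) → ℝ) (ω : ∀ k, Fin (d k)) : ℝ :=
  ∑ s, ∏ k, a s k (ω k)

lemma cpSum_snoc {p : ℕ} (a : Fin p → ∀ k, Fin (d k) → ℝ) (A : ∀ k, Fin (d k) → ℝ) (ω) :
    cpSum (Fin.snoc a A) ω = cpSum a ω + ∏ k, A k (ω k) := by
  unfold cpSum
  rw [Fin.sum_univ_castSucc]
  simp

lemma pad {p q : ℕ} (h : p ≤ q) (a : Fin p → ∀ k, Fin (d k) → ℝ) :
    HasCPRankLE q (cpSum a) := by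
  classical
  refine ⟨fun s k i => if h' : (s : ℕ) < p then a ⟨s, h'⟩ k i else 0, fun ω => ?_⟩
  have key : ∀ s : Fin q, (∏ k, (if h' : (s : ℕ) < p then a ⟨s, h'⟩ k (ω k) else 0))
      = if h' : (s : ℕ) < p then ∏ k, a ⟨s, h'⟩ k (ω k) else 0 := by
    intro s
    by_cases hs : (s : ℕ) < p
    · simp [hs]
    · simp only [hs, dif_neg, not_false_iff]
      exact Finset.prod_eq_zero (Finset.mem_univ (Classical.arbitrary ι)) rfl
  rw [Finset.sum_congr rfl fun s _ => key s]
  rw [Fin.sum_univ_eq_sum_range (fun n => if h' : n < p then ∏ k, a ⟨n, h'⟩ k (ω k) else 0)]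
  rw [← Finset.sum_subset (Finset.range_subset_range.2 h)
    (fun n _ hn => dif_neg (by simpa using hn))]
  rw [← Fin.sum_univ_eq_sum_range (fun n => if h' : n < p then ∏ k, a ⟨n, h'⟩ k (ω k) else 0)]
  unfold cpSum
  apply Finset.sum_congr rfl
  intro s _
  rw [dif_pos s.2]



lemma sigma_above (roots : Finset ℝ) (σ : ℝ → ℝ)
    (hC2 : ∀ u v, u ∈ Set.Icc (0:ℝ) 1 → v ∈ Set.Icc (0:ℝ) 1 → u ≤ v →
      (∀ t ∈ Set.Icc u v, t ∉ roots) → σ u = σ v)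
    (z : ℝ) (hz : z ∈ Set.Icc (0:ℝ) 1) (htop : ∀ s ∈ roots, s ≤ z)
    (t : ℝ) (ht : t ∈ Set.Icc (0:ℝ) 1) (hzt : z < t) : σ t = σ ((z+1)/2) := by
  obtain ⟨hz0, hz1⟩ := hz
  obtain ⟨ht0, ht1⟩ := ht
  have hw0 : (0:ℝ) ≤ (z+1)/2 := by linarith
  have hw1 : (z+1)/2 ≤ 1 := by linarith
  have hzw : z < (z+1)/2 := by
    have : z < 1 := lt_of_lt_of_le hzt ht1
    linarith
  rcases le_total t ((z+1)/2) with h | h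
  · exact hC2 t ((z+1)/2) ⟨ht0, ht1⟩ ⟨hw0, hw1⟩ h
      (fun s hs hmem => absurd (htop s hmem) (not_le.2 (lt_of_lt_of_le hzt hs.1)))
  · exact (hC2 ((z+1)/2) t ⟨hw0, hw1⟩ ⟨ht0, ht1⟩ h
      (fun s hs hmem => absurd (htop s hmem) (not_le.2 (lt_of_lt_of_le hzw hs.1)))).symm

lemma sigma_below (roots : Finset ℝ) (σ : ℝ → ℝ)
    (hC2 : ∀ u v, u ∈ Set.Icc (0:ℝ) 1 → v ∈ Set.Icc (0:ℝ) 1 → u ≤ v →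
      (∀ t ∈ Set.Icc u v, t ∉ roots) → σ u = σ v)
    (z : ℝ) (hz : z ∈ Set.Icc (0:ℝ) 1) (hbot : ∀ s ∈ roots, ¬ s < z)
    (t : ℝ) (ht : t ∈ Set.Icc (0:ℝ) 1) (htz : t < z) : σ t = σ (z/2) := by
  obtain ⟨hz0, hz1⟩ := hz
  obtain ⟨ht0, ht1⟩ := ht
  have hzpos : 0 < z := lt_of_le_of_lt ht0 htz
  have hw0 : (0:ℝ) ≤ z/2 := by linarith
  have hw1 : z/2 ≤ 1 := by linarith
  have hwz : z/2 < z := by linarith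
  rcases le_total t (z/2) with h | h
  · exact hC2 t (z/2) ⟨ht0, ht1⟩ ⟨hw0, hw1⟩ h
      (fun s hs hmem => (hbot s hmem) (lt_of_le_of_lt hs.2 hwz))
  · exact (hC2 (z/2) t ⟨hw0, hw1⟩ ⟨ht0, ht1⟩ h
      (fun s hs hmem => (hbot s hmem) (lt_of_le_of_lt hs.2 htz))).symm



set_option linter.unusedSectionVars false



/-- the max tensor -/
def Mx (x : ∀ k, Fin (d k) → ℝ) (ω : ∀ k, Fin (d k)) : ℝ :=
  Finset.univ.sup' Finset.univ_nonempty fun k => x k (ω k)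

noncomputable def constAtom (c : ℝ) : ∀ k : ι, Fin (d k) → ℝ :=
  fun k _ => if k = Classical.arbitrary ι then c else 1

noncomputable def ltAtom (x : ∀ k, Fin (d k) → ℝ) (z : ℝ) : ∀ k, Fin (d k) → ℝ :=
  fun k i => if x k i < z then 1 else 0

noncomputable def leAtom (x : ∀ k, Fin (d k) → ℝ) (z : ℝ) : ∀ k, Fin (d k) → ℝ :=
  fun k i => if x k i ≤ z then 1 else 0

noncomputable def mulAtom (A B : ∀ k, Fin (d k) → ℝ) : ∀ k, Fin (d k) → ℝ :=
  fun k i => A k i * B k i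

noncomputable def qAtom (x : ∀ k, Fin (d k) → ℝ) (z : ℝ) : ∀ k, Fin (d k) → ℝ :=
  fun k i => if x k i < z then 2
    else if x k i = z then ((2:ℝ) ^ (Fintype.card ι - 1))⁻¹ else 1

lemma prod_constAtom (c : ℝ) (ω : ∀ k, Fin (d k)) :
    (∏ k, constAtom c k (ω k)) = c := by
  unfold constAtom
  rw [Finset.prod_ite_eq' Finset.univ (Classical.arbitrary ι) (fun _ => c)]
  simp

lemma prod_mulAtom (A B : ∀ k, Fin (d k) → ℝ) (ω : ∀ k, Fin (d k)) :
    (∏ k, mulAtom A B k (ω k)) = (∏ k, A k (ω k)) * ∏ k, B k (ω k) := by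
  unfold mulAtom; rw [Finset.prod_mul_distrib]

lemma le_Mx (x : ∀ k, Fin (d k) → ℝ) (ω) (k : ι) : x k (ω k) ≤ Mx x ω :=
  Finset.le_sup' (fun k => x k (ω k)) (Finset.mem_univ k)

lemma prod_ltAtom (x : ∀ k, Fin (d k) → ℝ) (z : ℝ) (ω) :
    (∏ k, ltAtom x z k (ω k)) = if Mx x ω < z then 1 else 0 := by
  by_cases h : Mx x ω < z
  · rw [if_pos h]
    have h' : ∀ k, x k (ω k) < z := fun k => lt_of_le_of_lt (le_Mx x ω k) h
    simp [ltAtom, h']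
  · rw [if_neg h]
    rw [Mx, Finset.sup'_lt_iff] at h
    push_neg at h
    obtain ⟨k, -, hk⟩ := h
    exact Finset.prod_eq_zero (Finset.mem_univ k) (if_neg (not_lt.2 hk))

lemma prod_leAtom (x : ∀ k, Fin (d k) → ℝ) (z : ℝ) (ω) :
    (∏ k, leAtom x z k (ω k)) = if Mx x ω ≤ z then 1 else 0 := by
  by_cases h : Mx x ω ≤ z
  · rw [if_pos h]
    have h' : ∀ k, x k (ω k) ≤ z := fun k => le_trans (le_Mx x ω k) h
    simp [leAtom, h']
  · rw [if_neg h]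
    rw [Mx, Finset.sup'_le_iff] at h
    push_neg at h
    obtain ⟨k, -, hk⟩ := h
    exact Finset.prod_eq_zero (Finset.mem_univ k) (if_neg (not_le.2 hk))

lemma qAtom_pos (x : ∀ k, Fin (d k) → ℝ) (z : ℝ) (k : ι) (i : Fin (d k)) :
    0 < qAtom x z k i := by
  unfold qAtom
  split
  · norm_num
  · split
    · positivity
    · norm_num

lemma qAtom_le_two (x : ∀ k, Fin (d k) → ℝ) (z : ℝ) (k : ι) (i : Fin (d k)) :
    qAtom x z k i ≤ 2 := by
  unfold qAtom
  have h1 : ((2:ℝ) ^ (Fintype.card ι - 1))⁻¹ ≤ 2 := by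
    have : (1:ℝ) ≤ 2 ^ (Fintype.card ι - 1) := one_le_pow₀ (by norm_num)
    have h2 : ((2:ℝ) ^ (Fintype.card ι - 1))⁻¹ ≤ 1 := by
      rw [inv_le_one_iff₀]; right; exact this
    linarith
  split
  · norm_num
  · split
    · exact h1
    · norm_num



variable {ι : Type*} [Fintype ι] [Nonempty ι] {d : ι → ℕ}

lemma main (x : ∀ k, Fin (d k) → ℝ)
    (hM : ∀ ω, Mx x ω ∈ Set.Icc (0:ℝ) 1) :
    ∀ (m : ℕ) (roots : Finset ℝ),
      roots.card = m →
      (∀ t ∈ roots, t ∈ Set.Icc (0:ℝ) 1) →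
      ∀ σ : ℝ → ℝ,
        (∀ t, σ t = 1 ∨ σ t = -1) →
        (∀ u v, u ∈ Set.Icc (0:ℝ) 1 → v ∈ Set.Icc (0:ℝ) 1 → u ≤ v →
          (∀ t ∈ Set.Icc u v, t ∉ roots) → σ u = σ v) →
        (∀ t ∈ roots, σ t = 1) →
        ∃ (p : ℕ) (a : Fin p → ∀ k, Fin (d k) → ℝ),
          p ≤ max 1 (2 * m) ∧ ∀ ω, sgn (cpSum a ω) = σ (Mx x ω) := by
  intro m
  induction m with
  | zero =>
    intro roots hcard hsub σ hC1 hC2 hC3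
    have hempty : roots = ∅ := Finset.card_eq_zero.1 hcard
    refine ⟨1, fun _ => constAtom (σ 0), le_max_left _ _, fun ω => ?_⟩
    have h1 : cpSum (fun _ : Fin 1 => constAtom (σ 0) : Fin 1 → ∀ k, Fin (d k) → ℝ) ω = σ 0 := by
      unfold cpSum
      rw [Fin.sum_univ_one, prod_constAtom]
    have h2 : σ (Mx x ω) = σ 0 :=
      (hC2 0 (Mx x ω) (by norm_num) (hM ω) (hM ω).1 (by simp [hempty])).symm
    rw [h1, h2]
    rcases hC1 0 with h | h <;> rw [h]
    · exact sgn_one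
    · exact sgn_neg_one
  | succ m ih =>
    intro roots hcard hsub σ hC1 hC2 hC3
    have hne : roots.Nonempty := Finset.card_pos.1 (by omega)
    set z := roots.max' hne with hzdef
    have hzmem : z ∈ roots := roots.max'_mem hne
    have hz01 : z ∈ Set.Icc (0:ℝ) 1 := hsub z hzmem
    have htop : ∀ s ∈ roots, s ≤ z := fun s hs => Finset.le_max' roots s hs
    have habove : ∀ t ∈ Set.Icc (0:ℝ) 1, z < t → σ t = σ ((z+1)/2) :=
      fun t ht h => sigma_above roots σ hC2 z hz01 htop t ht h
    have hσz : σ z = 1 := hC3 z hzmem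
    rcases Nat.eq_zero_or_pos m with hm | hm
    · -- single root
      subst hm
      have hsingle : roots = {z} := by
        obtain ⟨w, hw⟩ := Finset.card_eq_one.1 hcard
        rw [hw] at hzmem ⊢
        rw [Finset.mem_singleton.1 hzmem]
      have hbot : ∀ s ∈ roots, ¬ s < z := by
        intro s hs
        rw [hsingle, Finset.mem_singleton] at hs
        rw [hs]; exact lt_irrefl z
      have hbelow : ∀ t ∈ Set.Icc (0:ℝ) 1, t < z → σ t = σ (z/2) :=
        fun t ht h => sigma_below roots σ hC2 z hz01 hbot t ht h
      rcases hC1 (z/2) with he0 | he0 <;> rcases hC1 ((z+1)/2) with he1 | he1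
      · refine ⟨1, fun _ => constAtom 1, le_max_left _ _, fun ω => ?_⟩
        have h1 : cpSum (fun _ : Fin 1 => constAtom (1:ℝ) : Fin 1 → ∀ k, Fin (d k) → ℝ) ω = 1 := by
          unfold cpSum
          rw [Fin.sum_univ_one, prod_constAtom]
        rw [h1, sgn_one]
        rcases lt_trichotomy (Mx x ω) z with h | h | h
        · rw [hbelow _ (hM ω) h, he0]
        · rw [h, hσz]
        · rw [habove _ (hM ω) h, he1]
      · refine ⟨2, ![mulAtom (constAtom 2) (leAtom x z), constAtom (-1)], le_max_right _ _, fun ω => ?_⟩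
        have h1 : cpSum ![mulAtom (constAtom 2) (leAtom x z), constAtom (-1)] ω
            = 2 * (if Mx x ω ≤ z then (1:ℝ) else 0) + (-1) := by
          unfold cpSum
          simp only [Fin.sum_univ_two, Matrix.cons_val_zero, Matrix.cons_val_one, Matrix.head_cons]
          rw [prod_mulAtom, prod_constAtom, prod_leAtom, prod_constAtom]
        rcases lt_trichotomy (Mx x ω) z with h | h | h
        · rw [h1, if_pos h.le, show (2:ℝ) * 1 + -1 = 1 by norm_num, sgn_one,
            hbelow _ (hM ω) h, he0]
        · rw [h1, if_pos h.le, show (2:ℝ) * 1 + -1 = 1 by norm_num, sgn_one, h, hσz]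
        · rw [h1, if_neg (not_le.2 h), show (2:ℝ) * 0 + -1 = -1 by norm_num, sgn_neg_one,
            habove _ (hM ω) h, he1]
      · refine ⟨2, ![constAtom 1, mulAtom (constAtom (-2)) (ltAtom x z)], le_max_right _ _, fun ω => ?_⟩
        have h1 : cpSum ![constAtom 1, mulAtom (constAtom (-2)) (ltAtom x z)] ω
            = 1 + (-2) * (if Mx x ω < z then (1:ℝ) else 0) := by
          unfold cpSum
          simp only [Fin.sum_univ_two, Matrix.cons_val_zero, Matrix.cons_val_one, Matrix.head_cons]
          rw [prod_mulAtom, prod_constAtom, prod_ltAtom, prod_constAtom]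
        rcases lt_trichotomy (Mx x ω) z with h | h | h
        · rw [h1, if_pos h, show (1:ℝ) + -2 * 1 = -1 by norm_num, sgn_neg_one,
            hbelow _ (hM ω) h, he0]
        · rw [h1, if_neg (by rw [h]; exact lt_irrefl z),
            show (1:ℝ) + -2 * 0 = 1 by norm_num, sgn_one, h, hσz]
        · rw [h1, if_neg (not_lt.2 h.le), show (1:ℝ) + -2 * 0 = 1 by norm_num, sgn_one,
            habove _ (hM ω) h, he1]
      · refine ⟨2, ![leAtom x z, mulAtom (constAtom (-1)) (qAtom x z)], le_max_right _ _, fun ω => ?_⟩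
        have h1 : cpSum ![leAtom x z, mulAtom (constAtom (-1)) (qAtom x z)] ω
            = (if Mx x ω ≤ z then (1:ℝ) else 0) + (-1) * ∏ k, qAtom x z k (ω k) := by
          unfold cpSum
          simp only [Fin.sum_univ_two, Matrix.cons_val_zero, Matrix.cons_val_one, Matrix.head_cons]
          rw [prod_mulAtom, prod_constAtom, prod_leAtom]
        rcases lt_trichotomy (Mx x ω) z with h | h | h
        · -- M < z : all coords < z, product = 2^K > 1
          have hall : ∀ k, qAtom x z k (ω k) = 2 :=
            fun k => if_pos (lt_of_le_of_lt (le_Mx x ω k) h)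
          have hprod : (∏ k, qAtom x z k (ω k)) = 2 ^ Fintype.card ι := by
            rw [Finset.prod_congr rfl fun k _ => hall k, Finset.prod_const, Finset.card_univ]
          have hgt : (1:ℝ) < 2 ^ Fintype.card ι :=
            one_lt_pow₀ (by norm_num) Fintype.card_ne_zero
          rw [h1, if_pos h.le, hprod, sgn_of_neg (by linarith), hbelow _ (hM ω) h, he0]
        · -- M = z
          obtain ⟨k₀, -, hk₀⟩ := Finset.exists_mem_eq_sup' Finset.univ_nonempty
            (fun k => x k (ω k))
          have hxk₀ : x k₀ (ω k₀) = z := by rw [← hk₀, ← h]; rfl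
          have hq₀ : qAtom x z k₀ (ω k₀) = ((2:ℝ) ^ (Fintype.card ι - 1))⁻¹ := by
            unfold qAtom
            rw [if_neg (by rw [hxk₀]; exact lt_irrefl z), if_pos hxk₀]
          have hbpos : (0:ℝ) < ((2:ℝ) ^ (Fintype.card ι - 1))⁻¹ := by positivity
          have key : (∏ k, qAtom x z k (ω k)) ≤ 1 := by
            rw [← Finset.mul_prod_erase Finset.univ _ (Finset.mem_univ k₀), hq₀]
            have hb : (∏ k ∈ Finset.univ.erase k₀, qAtom x z k (ω k))
                ≤ ∏ k ∈ Finset.univ.erase k₀, (2:ℝ) :=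
              Finset.prod_le_prod (fun k _ => (qAtom_pos x z k (ω k)).le)
                (fun k _ => qAtom_le_two x z k (ω k))
            rw [Finset.prod_const, Finset.card_erase_of_mem (Finset.mem_univ k₀),
              Finset.card_univ] at hb
            calc ((2:ℝ) ^ (Fintype.card ι - 1))⁻¹ * ∏ k ∈ Finset.univ.erase k₀, qAtom x z k (ω k)
                ≤ ((2:ℝ) ^ (Fintype.card ι - 1))⁻¹ * 2 ^ (Fintype.card ι - 1) :=
                  mul_le_mul_of_nonneg_left hb hbpos.le
              _ = 1 := inv_mul_cancel₀ (by positivity)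
          rw [h1, if_pos h.le, sgn_of_nonneg (by linarith), h, hσz]
        · -- M > z
          have hppos : (0:ℝ) < ∏ k, qAtom x z k (ω k) :=
            Finset.prod_pos (fun k _ => qAtom_pos x z k (ω k))
          rw [h1, if_neg (not_le.2 h), sgn_of_neg (by linarith), habove _ (hM ω) h, he1]
    · -- inductive step: m ≥ 1
      have hcard' : (roots.erase z).card = m := by
        rw [Finset.card_erase_of_mem hzmem, hcard]
        omega
      have hsub' : ∀ t ∈ roots.erase z, t ∈ Set.Icc (0:ℝ) 1 :=
        fun t ht => hsub t (Finset.mem_of_mem_erase ht)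
      have hltz : ∀ t ∈ roots.erase z, t < z :=
        fun t ht => lt_of_le_of_ne (htop t (Finset.mem_of_mem_erase ht))
          (Finset.ne_of_mem_erase ht)
      set u := if h : (roots.erase z).Nonempty then ((roots.erase z).max' h + z)/2 else z/2
        with hu
      have hu01 : u ∈ Set.Icc (0:ℝ) 1 := by
        rw [hu]; split
        · next h =>
          have h1 := hsub' _ ((roots.erase z).max'_mem h)
          have h2 := hltz _ ((roots.erase z).max'_mem h)
          exact ⟨by linarith [h1.1, hz01.1], by linarith [hz01.2]⟩
        · exact ⟨by linarith [hz01.1], by linarith [hz01.2]⟩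
      have huz : 0 < z → u < z := by
        intro hz0; rw [hu]; split
        · next h => have h2 := hltz _ ((roots.erase z).max'_mem h); linarith
        · linarith
      have hRu : ∀ t ∈ roots, t < z → t < u := by
        intro t ht htz
        have ht' : t ∈ roots.erase z := Finset.mem_erase.2 ⟨ne_of_lt htz, ht⟩
        have hne' : (roots.erase z).Nonempty := ⟨t, ht'⟩
        rw [hu, dif_pos hne']
        have h3 := Finset.le_max' (roots.erase z) t ht'
        have h2 := hltz _ ((roots.erase z).max'_mem hne')
        linarith
      set σ' : ℝ → ℝ := fun t => if t < z then σ t else σ u with hσ'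
      have hC1' : ∀ t, σ' t = 1 ∨ σ' t = -1 := by
        intro t; rw [hσ']; dsimp only; split
        · exact hC1 t
        · exact hC1 u
      have hC3' : ∀ t ∈ roots.erase z, σ' t = 1 := by
        intro t ht
        rw [hσ']; dsimp only
        rw [if_pos (hltz t ht)]
        exact hC3 t (Finset.mem_of_mem_erase ht)
      have hC2' : ∀ p q, p ∈ Set.Icc (0:ℝ) 1 → q ∈ Set.Icc (0:ℝ) 1 → p ≤ q →
          (∀ t ∈ Set.Icc p q, t ∉ roots.erase z) → σ' p = σ' q := by
        intro p q hp hq hpq hfree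
        rw [hσ']; dsimp only
        by_cases hqz : q < z
        · have hpz : p < z := lt_of_le_of_lt hpq hqz
          rw [if_pos hpz, if_pos hqz]
          refine hC2 p q hp hq hpq (fun t ht hmem => ?_)
          exact hfree t ht (Finset.mem_erase.2 ⟨ne_of_lt (lt_of_le_of_lt ht.2 hqz), hmem⟩)
        · push_neg at hqz
          by_cases hpz : p < z
          · rw [if_pos hpz, if_neg (not_lt.2 hqz)]
            have hz0 : 0 < z := lt_of_le_of_lt hp.1 hpz
            have huz' : u < z := huz hz0
            rcases le_total p u with hpu | hup
            · refine hC2 p u hp hu01 hpu (fun t ht hmem => ?_)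
              exact hfree t ⟨ht.1, le_trans ht.2 (le_trans huz'.le hqz)⟩
                (Finset.mem_erase.2 ⟨ne_of_lt (lt_of_le_of_lt ht.2 huz'), hmem⟩)
            · refine (hC2 u p hu01 hp hup (fun t ht hmem => ?_)).symm
              exact absurd (hRu t hmem (lt_of_le_of_lt ht.2 hpz)) (not_lt.2 ht.1)
          · rw [if_neg hpz, if_neg (not_lt.2 hqz)]
      obtain ⟨p', a', hp', hsgn'⟩ := ih (roots.erase z) hcard' hsub' σ' hC1' hC2' hC3'
      have hp2 : p' ≤ 2 * m := by
        rw [max_eq_right (by omega : 1 ≤ 2 * m)] at hp'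
        exact hp'
      have hZ'' : ∀ ω, cpSum (fun s => mulAtom (a' s) (ltAtom x z) : Fin p' → ∀ k, Fin (d k) → ℝ) ω
          = cpSum a' ω * (if Mx x ω < z then 1 else 0) := by
        intro ω
        unfold cpSum
        rw [Finset.sum_mul]
        exact Finset.sum_congr rfl fun s _ => by
          simp only [prod_mulAtom, prod_ltAtom]
      rcases hC1 ((z+1)/2) with he | he
      · -- sign above z is +1 : add atoms 1 and -1[M < z]
        refine ⟨p' + 1 + 1,
          Fin.snoc (Fin.snoc (fun s => mulAtom (a' s) (ltAtom x z)) (constAtom 1))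
            (mulAtom (constAtom (-1)) (ltAtom x z)), ?_, fun ω => ?_⟩
        · rw [max_eq_right (by omega : 1 ≤ 2 * (m+1))]; omega
        · have hval : cpSum (Fin.snoc (Fin.snoc
              (fun s => mulAtom (a' s) (ltAtom x z)) (constAtom 1))
              (mulAtom (constAtom (-1)) (ltAtom x z))) ω
              = cpSum a' ω * (if Mx x ω < z then 1 else 0) + 1
                + (-1) * (if Mx x ω < z then 1 else 0) := by
            rw [cpSum_snoc, cpSum_snoc, hZ'', prod_constAtom, prod_mulAtom, prod_constAtom,
              prod_ltAtom]
          rcases lt_trichotomy (Mx x ω) z with h | h | h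
          · have hv : cpSum (Fin.snoc (Fin.snoc
                (fun s => mulAtom (a' s) (ltAtom x z)) (constAtom 1))
                (mulAtom (constAtom (-1)) (ltAtom x z))) ω = cpSum a' ω := by
              rw [hval, if_pos h]; ring
            rw [hv, hsgn' ω, hσ']
            dsimp only
            rw [if_pos h]
          · have hv : cpSum (Fin.snoc (Fin.snoc
                (fun s => mulAtom (a' s) (ltAtom x z)) (constAtom 1))
                (mulAtom (constAtom (-1)) (ltAtom x z))) ω = 1 := by
              rw [hval, if_neg (by rw [h]; exact lt_irrefl z)]; ring
            rw [hv, sgn_one, h, hσz]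
          · have hv : cpSum (Fin.snoc (Fin.snoc
                (fun s => mulAtom (a' s) (ltAtom x z)) (constAtom 1))
                (mulAtom (constAtom (-1)) (ltAtom x z))) ω = 1 := by
              rw [hval, if_neg (not_lt.2 h.le)]; ring
            rw [hv, sgn_one, habove _ (hM ω) h, he]
      · -- sign above z is -1 : add atoms 1[M ≤ z] and -1
        refine ⟨p' + 1 + 1,
          Fin.snoc (Fin.snoc (fun s => mulAtom (a' s) (ltAtom x z)) (leAtom x z))
            (constAtom (-1)), ?_, fun ω => ?_⟩
        · rw [max_eq_right (by omega : 1 ≤ 2 * (m+1))]; omega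
        · have hval : cpSum (Fin.snoc (Fin.snoc
              (fun s => mulAtom (a' s) (ltAtom x z)) (leAtom x z)) (constAtom (-1))) ω
              = cpSum a' ω * (if Mx x ω < z then 1 else 0)
                + (if Mx x ω ≤ z then 1 else 0) + (-1) := by
            rw [cpSum_snoc, cpSum_snoc, hZ'', prod_leAtom, prod_constAtom]
          rcases lt_trichotomy (Mx x ω) z with h | h | h
          · have hv : cpSum (Fin.snoc (Fin.snoc
                (fun s => mulAtom (a' s) (ltAtom x z)) (leAtom x z)) (constAtom (-1))) ω
                = cpSum a' ω := by
              rw [hval, if_pos h, if_pos h.le]; ring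
            rw [hv, hsgn' ω, hσ']
            dsimp only
            rw [if_pos h]
          · have hv : cpSum (Fin.snoc (Fin.snoc
                (fun s => mulAtom (a' s) (ltAtom x z)) (leAtom x z)) (constAtom (-1))) ω
                = 0 := by
              rw [hval, if_neg (by rw [h]; exact lt_irrefl z), if_pos h.le]; ring
            rw [hv, sgn_zero, h, hσz]
          · have hv : cpSum (Fin.snoc (Fin.snoc
                (fun s => mulAtom (a' s) (ltAtom x z)) (leAtom x z)) (constAtom (-1))) ω
                = -1 := by
              rw [hval, if_neg (not_lt.2 h.le), if_neg (not_le.2 h)]; ring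
            rw [hv, sgn_neg_one, habove _ (hM ω) h, he]


end Stmt10

/-- general max hypergraphon: let
`Z_max(i₁,…,i_K) = max_k x^{(k)}_{i_k}` with `x^{(k)}_{i_k} ∈ [0,1]`, `g` continuous,
and suppose `{z : g(z) = π}` has at most `r ≥ 1` elements. Then `Θ = g(Z_max)` satisfies
`srank(Θ − π) ≤ 2r`: some tensor of CP rank at most `2r` has the sign pattern of `Θ − π`. -/
theorem stmt10 {ι : Type*} [Fintype ι] [Nonempty ι] {d : ι → ℕ}
    (x : ∀ k, Fin (d k) → ℝ) (hx : ∀ k i, x k i ∈ Set.Icc (0 : ℝ) 1)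
    (g : ℝ → ℝ) (hg : Continuous g) (π : ℝ) (r : ℕ) (hr : 1 ≤ r)
    (hfin : {z : ℝ | g z = π}.Finite) (hcard : hfin.toFinset.card ≤ r)
    (Θ : (∀ k, Fin (d k)) → ℝ)
    (hΘ : ∀ ω, Θ ω = g (Finset.univ.sup' Finset.univ_nonempty (fun k => x k (ω k)))) :
    ∃ Z : (∀ k, Fin (d k)) → ℝ,
      HasCPRankLE (2 * r) Z ∧ ∀ ω, sgn (Z ω) = sgn (Θ ω - π) := by
  classical
  set roots : Finset ℝ := hfin.toFinset.filter (fun t => t ∈ Set.Icc (0:ℝ) 1) with hroots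
  have hrmem : ∀ t : ℝ, t ∈ roots ↔ g t = π ∧ t ∈ Set.Icc (0:ℝ) 1 := by
    intro t
    rw [hroots, Finset.mem_filter, Set.Finite.mem_toFinset]
    rfl
  have hsub : ∀ t ∈ roots, t ∈ Set.Icc (0:ℝ) 1 := fun t ht => ((hrmem t).1 ht).2
  have hM : ∀ ω, Stmt10.Mx x ω ∈ Set.Icc (0:ℝ) 1 := by
    intro ω
    constructor
    · exact le_trans (hx (Classical.arbitrary ι) (ω (Classical.arbitrary ι))).1
        (Stmt10.le_Mx x ω (Classical.arbitrary ι))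
    · exact Finset.sup'_le _ _ (fun k _ => (hx k (ω k)).2)
  have hC1 : ∀ t : ℝ, sgn (g t - π) = 1 ∨ sgn (g t - π) = -1 := by
    intro t
    by_cases h : 0 ≤ g t - π
    · exact Or.inl (Stmt10.sgn_of_nonneg h)
    · exact Or.inr (Stmt10.sgn_of_neg (not_le.1 h))
  have hC2 : ∀ u v : ℝ, u ∈ Set.Icc (0:ℝ) 1 → v ∈ Set.Icc (0:ℝ) 1 → u ≤ v →
      (∀ t ∈ Set.Icc u v, t ∉ roots) → sgn (g u - π) = sgn (g v - π) := by
    intro u v hu hv huv hfree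
    have hnr : ∀ t ∈ Set.Icc u v, g t ≠ π := by
      intro t ht hgt
      exact hfree t ht ((hrmem t).2 ⟨hgt, ⟨le_trans hu.1 ht.1, le_trans ht.2 hv.2⟩⟩)
    by_cases h1 : 0 ≤ g u - π <;> by_cases h2 : 0 ≤ g v - π
    · rw [Stmt10.sgn_of_nonneg h1, Stmt10.sgn_of_nonneg h2]
    · exfalso
      have hgu : π < g u := by
        rcases lt_or_eq_of_le (by linarith : π ≤ g u) with h | h
        · exact h
        · exact absurd h.symm (hnr u ⟨le_refl u, huv⟩)
      have hgv : g v < π := by linarith [not_le.1 h2]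
      obtain ⟨t, ht, hgt⟩ := intermediate_value_Icc' huv hg.continuousOn
        (Set.mem_Icc.2 ⟨hgv.le, hgu.le⟩)
      exact hnr t ht hgt
    · exfalso
      have hgv : π < g v := by
        rcases lt_or_eq_of_le (by linarith : π ≤ g v) with h | h
        · exact h
        · exact absurd h.symm (hnr v ⟨huv, le_refl v⟩)
      have hgu : g u < π := by linarith [not_le.1 h1]
      obtain ⟨t, ht, hgt⟩ := intermediate_value_Icc huv hg.continuousOn
        (Set.mem_Icc.2 ⟨hgu.le, hgv.le⟩)
      exact hnr t ht hgt
    · rw [Stmt10.sgn_of_neg (not_le.1 h1), Stmt10.sgn_of_neg (not_le.1 h2)]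
  have hC3 : ∀ t ∈ roots, sgn (g t - π) = 1 := by
    intro t ht
    rw [((hrmem t).1 ht).1]
    simpa using Stmt10.sgn_zero
  obtain ⟨p, a, hp, hsgn⟩ := Stmt10.main x hM roots.card roots rfl hsub
    (fun t => sgn (g t - π)) hC1 hC2 hC3
  have hcard' : roots.card ≤ r := le_trans (Finset.card_filter_le _ _) hcard
  have hple : p ≤ 2 * r := le_trans hp (max_le (by omega) (by omega))
  refine ⟨Stmt10.cpSum a, Stmt10.pad hple a, fun ω => ?_⟩
  rw [hsgn ω, hΘ ω]
  rfl
end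

section
/- For every d ≥ 2, the d×d real matrix M with entries M(i,j) = |i − j| for i,j ∈ {1,…,d} has rank d (i.e., M is invertible). -/
/-- candidate inverse (times `2*(e+1)`) of the distance matrix of size `e+2`. -/
noncomputable def nfun (e j k : ℕ) : ℝ :=
  (if j + 1 = k then (e + 1 : ℝ) else 0) + (if j = k + 1 then (e + 1 : ℝ) else 0)
  + (if j = k then (if k = 0 ∨ k = e + 1 then -(e : ℝ) else -2 * ((e : ℝ) + 1)) else 0)
  + (if (j = 0 ∧ k = e + 1) ∨ (j = e + 1 ∧ k = 0) then (1 : ℝ) else 0)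

lemma collapse (d a : ℕ) (ha : a < d) (f : ℕ → ℝ) (v : ℝ) :
    ∑ j ∈ Finset.range d, f j * (if j = a then v else 0) = f a * v := by
  simp only [mul_ite, mul_zero]
  rw [Finset.sum_ite_eq' (Finset.range d) a (fun j => f j * v)]
  simp [ha]

lemma collapseP (d a : ℕ) (P : ℕ → Prop) [DecidablePred P] (ha : a < d)
    (hP : ∀ j, P j ↔ j = a) (f : ℕ → ℝ) (v : ℝ) :
    ∑ j ∈ Finset.range d, f j * (if P j then v else 0) = f a * v := by
  have h : ∀ j ∈ Finset.range d, f j * (if P j then v else 0) = f j * (if j = a then v else 0) :=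
    fun j _ => by rw [if_congr (hP j) rfl rfl]
  rw [Finset.sum_congr rfl h, collapse d a ha f v]

lemma collapsePz (d : ℕ) (P : ℕ → Prop) [DecidablePred P]
    (hP : ∀ j, j < d → ¬ P j) (f : ℕ → ℝ) (v : ℝ) :
    ∑ j ∈ Finset.range d, f j * (if P j then v else 0) = 0 :=
  Finset.sum_eq_zero fun j hj => by rw [if_neg (hP j (Finset.mem_range.mp hj)), mul_zero]

lemma abs_le_case {a b : ℕ} (h : a ≤ b) : |(a : ℝ) - b| = (b : ℝ) - a := by
  rw [abs_of_nonpos (by simp [Nat.cast_le.mpr h] : (a : ℝ) - b ≤ 0), neg_sub]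

lemma abs_ge_case {a b : ℕ} (h : b ≤ a) : |(a : ℝ) - b| = (a : ℝ) - b :=
  abs_of_nonneg (by simp [Nat.cast_le.mpr h])

lemma key_sum (e i k : ℕ) (hi : i < e + 2) (hk : k < e + 2) :
    ∑ j ∈ Finset.range (e + 2), |(i : ℝ) - j| * nfun e j k
      = if i = k then 2 * ((e : ℝ) + 1) else 0 := by
  unfold nfun
  simp only [mul_add]
  rw [Finset.sum_add_distrib, Finset.sum_add_distrib, Finset.sum_add_distrib]
  rcases Nat.eq_zero_or_pos k with rfl | hk1
  · -- k = 0
    rw [collapsePz (e + 2) (fun j => j + 1 = 0) (by omega),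
      collapseP (e + 2) 1 (fun j => j = 0 + 1) (by omega) (fun j => by omega),
      collapseP (e + 2) 0 (fun j => j = 0) (by omega) (fun j => by omega),
      collapseP (e + 2) (e + 1) (fun j => (j = 0 ∧ 0 = e + 1) ∨ (j = e + 1 ∧ 0 = 0))
        (by omega) (fun j => by omega)]
    rw [if_pos (by omega : (0:ℕ) = 0 ∨ (0:ℕ) = e + 1)]
    rcases Nat.eq_zero_or_pos i with rfl | hi1
    · rw [abs_le_case (by omega), abs_le_case (by omega), abs_le_case (by omega), if_pos rfl]
      push_cast; ring
    · rw [abs_ge_case (by omega), abs_ge_case (by omega), abs_le_case (by omega),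
        if_neg (by omega)]
      have h1 : (1:ℕ) ≤ i := hi1
      push_cast; ring
  · rcases Nat.lt_or_ge k (e + 1) with hke | hke
    · -- interior: 0 < k < e + 1
      obtain ⟨m, rfl⟩ : ∃ m, k = m + 1 := ⟨k - 1, by omega⟩
      rw [collapseP (e + 2) m (fun j => j + 1 = m + 1) (by omega) (fun j => by omega),
        collapseP (e + 2) (m + 2) (fun j => j = m + 1 + 1) (by omega) (fun j => by omega),
        collapseP (e + 2) (m + 1) (fun j => j = m + 1) (by omega) (fun j => by omega),
        collapsePz (e + 2) (fun j => (j = 0 ∧ m + 1 = e + 1) ∨ (j = e + 1 ∧ m + 1 = 0))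
          (by omega)]
      rw [if_neg (by omega : ¬ (m + 1 = 0 ∨ m + 1 = e + 1))]
      rcases Nat.lt_trichotomy i (m + 1) with hlt | heq | hgt
      · rw [abs_le_case (by omega), abs_le_case (by omega), abs_le_case (by omega),
          if_neg (by omega)]
        push_cast; ring
      · subst heq
        rw [abs_ge_case (by omega), abs_le_case (by omega), abs_le_case (by omega), if_pos rfl]
        push_cast; ring
      · rw [abs_ge_case (by omega), abs_ge_case (by omega), abs_ge_case (by omega),
          if_neg (by omega)]
        push_cast; ring
    · -- k = e + 1
      have hke' : k = e + 1 := by omega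
      subst hke'
      rw [collapseP (e + 2) e (fun j => j + 1 = e + 1) (by omega) (fun j => by omega),
        collapsePz (e + 2) (fun j => j = e + 1 + 1) (by omega),
        collapseP (e + 2) (e + 1) (fun j => j = e + 1) (by omega) (fun j => by omega),
        collapseP (e + 2) 0 (fun j => (j = 0 ∧ e + 1 = e + 1) ∨ (j = e + 1 ∧ e + 1 = 0))
          (by omega) (fun j => by omega)]
      rw [if_pos (by omega : e + 1 = 0 ∨ e + 1 = e + 1)]
      rcases Nat.lt_or_ge i (e + 1) with hlt | hge
      · rw [abs_le_case (by omega), abs_le_case (by omega), abs_ge_case (by omega),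
          if_neg (by omega)]
        push_cast; ring
      · have : i = e + 1 := by omega
        subst this
        rw [abs_ge_case (by omega), abs_ge_case (by omega), abs_ge_case (by omega), if_pos rfl]
        push_cast; ring

/-- for `d ≥ 2`, the `d×d` matrix with entries `M(i,j) = |i − j|` has full
rank `d`, i.e. it is invertible. -/
theorem stmt12 (d : ℕ) (hd : 2 ≤ d) (M : Matrix (Fin d) (Fin d) ℝ)
    (hM : ∀ i j : Fin d, M i j = |(i.val : ℝ) - (j.val : ℝ)|) :
    M.rank = d ∧ IsUnit M := by
  obtain ⟨e, rfl⟩ : ∃ e, d = e + 2 := ⟨d - 2, by omega⟩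
  have hc : (2 * ((e : ℝ) + 1)) ≠ 0 := by positivity
  set N : Matrix (Fin (e + 2)) (Fin (e + 2)) ℝ :=
    Matrix.of fun j k => nfun e j.val k.val / (2 * ((e : ℝ) + 1)) with hN
  have key : M * N = 1 := by
    ext i k
    rw [Matrix.mul_apply]
    simp only [hN, hM, Matrix.of_apply]
    have step1 : ∑ j : Fin (e + 2),
        |(i.val : ℝ) - (j.val : ℝ)| * (nfun e j.val k.val / (2 * ((e : ℝ) + 1)))
        = (∑ j : Fin (e + 2), |(i.val : ℝ) - (j.val : ℝ)| * nfun e j.val k.val)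
            / (2 * ((e : ℝ) + 1)) := by
      rw [Finset.sum_div]
      exact Finset.sum_congr rfl fun j _ => (mul_div_assoc _ _ _).symm
    rw [step1,
      Fin.sum_univ_eq_sum_range (fun j => |(i.val : ℝ) - (j : ℝ)| * nfun e j k.val),
      key_sum e i.val k.val i.isLt k.isLt]
    rcases eq_or_ne i k with rfl | hik
    · rw [if_pos rfl, Matrix.one_apply_eq, div_self hc]
    · rw [if_neg (fun h => hik (Fin.ext h)), Matrix.one_apply_ne hik, zero_div]
  have hu : IsUnit M := ⟨⟨M, N, key, mul_eq_one_comm.mp key⟩, rfl⟩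
  exact ⟨by rw [Matrix.rank_of_isUnit M hu, Fintype.card_fin], hu⟩
end

section
/- Let d ≥ 1 and let M be the d×d matrix with entries M(i,j) = |i − j|. Then for every π ∈ ℝ there exists a d×d real matrix B with matrix rank at most 3 such that sgn(B(i,j)) = sgn(M(i,j) − π) for all i,j ∈ {1,…,d}; that is, srank(M − π) ≤ 3 for all π ∈ ℝ. -/
/-- for the banded matrix `M(i,j) = |i − j|` and every `π ∈ ℝ`, there is a
matrix `B` of rank at most `3` with `sgn(B(i,j)) = sgn(M(i,j) − π)` for all `i, j`;
that is, `srank(M − π) ≤ 3`. -/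
theorem stmt13 (d : ℕ) (hd : 1 ≤ d) (M : Matrix (Fin d) (Fin d) ℝ)
    (hM : ∀ i j : Fin d, M i j = |(i.val : ℝ) - (j.val : ℝ)|) (π : ℝ) :
    ∃ B : Matrix (Fin d) (Fin d) ℝ, B.rank ≤ 3 ∧
      ∀ i j, sgn (B i j) = sgn (M i j - π) := by
  set π' : ℝ := max π 0 with hπ'
  set P : Matrix (Fin d) (Fin 3) ℝ := fun i k => ![(i.val : ℝ)^2, (i.val : ℝ), 1] k with hP
  set Q : Matrix (Fin 3) (Fin d) ℝ :=
    fun k j => ![(1 : ℝ), -2 * (j.val : ℝ), (j.val : ℝ)^2 - π'^2] k with hQ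
  refine ⟨P * Q, ?_, ?_⟩
  · calc (P * Q).rank ≤ Q.rank := Matrix.rank_mul_le_right P Q
      _ ≤ Fintype.card (Fin 3) := Matrix.rank_le_card_height Q
      _ = 3 := by simp
  · intro i j
    have hB : (P * Q) i j = ((i.val : ℝ) - (j.val : ℝ))^2 - π'^2 := by
      rw [Matrix.mul_apply, Fin.sum_univ_three]
      simp [hP, hQ]
      ring
    rw [hB, hM]
    have habs : (0 : ℝ) ≤ |(i.val : ℝ) - (j.val : ℝ)| := abs_nonneg _
    have hsq : |(i.val : ℝ) - (j.val : ℝ)|^2 = ((i.val : ℝ) - (j.val : ℝ))^2 := sq_abs _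
    have key : (0 ≤ ((i.val : ℝ) - (j.val : ℝ))^2 - π'^2) ↔
        (0 ≤ |(i.val : ℝ) - (j.val : ℝ)| - π) := by
      rcases le_or_gt π 0 with h | h
      · constructor
        · intro _; linarith
        · intro _
          have : π' = 0 := by simp [hπ', h]
          nlinarith [sq_nonneg ((i.val : ℝ) - (j.val : ℝ))]
      · have : π' = π := by simp [hπ', h.le]
        rw [this]
        constructor
        · intro h2; nlinarith
        · intro h2; nlinarith
    unfold sgn
    by_cases h : 0 ≤ ((i.val : ℝ) - (j.val : ℝ))^2 - π'^2
    · rw [if_pos h, if_pos (key.mp h)]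
    · rw [if_neg h, if_neg (fun hc => h (key.mpr hc))]
end

section
/- Let H ≥ 1 be an integer and θ ∈ [−1,1]. Then | (1/(2H+1)) · Σ_{h=−H}^{H} sgn(θ − h/H) − θ | ≤ 1/H, where the sum ranges over the grid π = h/H for integers h ∈ {−H,…,H}. -/
/-- for an integer `H ≥ 1` and `θ ∈ [−1,1]`, the average of the sign series
over the grid `{h/H : −H ≤ h ≤ H}` approximates `θ` within `1/H`:
`|(1/(2H+1))·Σ_{h=−H}^{H} sgn(θ − h/H) − θ| ≤ 1/H`. -/
theorem stmt17 (H : ℕ) (hH : 1 ≤ H) (θ : ℝ) (hθ : θ ∈ Set.Icc (-1 : ℝ) 1) :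
    |(1 / (2 * (H : ℝ) + 1)) *
        (∑ h ∈ Finset.Icc (-(H : ℤ)) (H : ℤ), sgn (θ - (h : ℝ) / (H : ℝ))) - θ|
      ≤ 1 / (H : ℝ) := by
  obtain ⟨hθ1, hθ2⟩ := hθ
  have hHpos : (0 : ℝ) < H := by exact_mod_cast hH
  set k : ℤ := ⌊θ * H⌋ with hk
  have hkle : (k : ℝ) ≤ θ * H := Int.floor_le _
  have hklt : θ * H < k + 1 := Int.lt_floor_add_one _
  have hk1 : -(H : ℤ) ≤ k := by
    have : (-(H : ℤ) : ℝ) ≤ θ * H := by push_cast; nlinarith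
    exact_mod_cast Int.le_floor.mpr (by exact_mod_cast this)
  have hk2 : k ≤ (H : ℤ) := by
    have : (k : ℝ) ≤ ((H : ℤ) : ℝ) := le_trans hkle (by push_cast; nlinarith)
    exact_mod_cast this
  -- each term is `if h ≤ k then 1 else -1`
  have hterm : ∀ h ∈ Finset.Icc (-(H : ℤ)) (H : ℤ),
      sgn (θ - (h : ℝ) / (H : ℝ)) = if h ≤ k then (1 : ℝ) else -1 := by
    intro h _
    unfold sgn
    congr 1
    rw [eq_iff_iff]
    constructor
    · intro hle
      have : (h : ℝ) ≤ θ * H := by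
        rw [sub_nonneg, div_le_iff₀ hHpos] at hle
        exact hle
      exact Int.le_floor.mpr (by exact_mod_cast this)
    · intro hle
      have : (h : ℝ) ≤ θ * H := le_trans (by exact_mod_cast hle) hkle
      rw [sub_nonneg, div_le_iff₀ hHpos]
      exact this
  rw [Finset.sum_congr rfl hterm, Finset.sum_ite, Finset.sum_const, Finset.sum_const]
  have hf1 : (Finset.Icc (-(H : ℤ)) (H : ℤ)).filter (fun h => h ≤ k)
      = Finset.Icc (-(H : ℤ)) k := by
    ext x
    simp only [Finset.mem_filter, Finset.mem_Icc]
    omega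
  have hf2 : (Finset.Icc (-(H : ℤ)) (H : ℤ)).filter (fun h => ¬ h ≤ k)
      = Finset.Icc (k + 1) (H : ℤ) := by
    ext x
    simp only [Finset.mem_filter, Finset.mem_Icc, not_le]
    omega
  rw [hf1, hf2, Int.card_Icc, Int.card_Icc, nsmul_eq_mul, nsmul_eq_mul]
  have hc1 : ((k + 1 - -(H : ℤ)).toNat : ℝ) = (k : ℝ) + 1 + H := by
    have : ((k + 1 - -(H : ℤ)).toNat : ℤ) = k + 1 + H := by
      rw [Int.toNat_of_nonneg (by omega)]; ring
    exact_mod_cast congrArg (fun z : ℤ => (z : ℝ)) this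
  have hc2 : (((H : ℤ) + 1 - (k + 1)).toNat : ℝ) = (H : ℝ) - k := by
    have : (((H : ℤ) + 1 - (k + 1)).toNat : ℤ) = H - k := by
      rw [Int.toNat_of_nonneg (by omega)]; ring
    exact_mod_cast congrArg (fun z : ℤ => (z : ℝ)) this
  rw [hc1, hc2]
  have h2H : (0 : ℝ) < 2 * H + 1 := by linarith
  have hX : (1 / (2 * (H : ℝ) + 1)) *
      (((k : ℝ) + 1 + H) * (1 : ℝ) + ((H : ℝ) - k) * (-1 : ℝ)) - θ
      = (2 * k + 1 - θ * (2 * H + 1)) / (2 * H + 1) := by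
    field_simp
    ring
  rw [hX, abs_div, abs_of_pos h2H, div_le_div_iff₀ h2H hHpos]
  rcases abs_cases (2 * (k : ℝ) + 1 - θ * (2 * H + 1)) with ⟨h, _⟩ | ⟨h, _⟩ <;>
    rw [h] <;> nlinarith
end

section
/- Let H ≥ 1 be an integer and let Π = {h/H : h ∈ ℤ, −H ≤ h ≤ H} be the level grid. Let Ω be a finite index set with probability weights {p_ω}, let Θ: Ω → [−1,1] be a tensor, and for each π ∈ Π let Ẑ_π: Ω → ℝ be an arbitrary tensor. Define the estimate Θ̂ = (1/(2H+1)) Σ_{π∈Π} sgn(Ẑ_π) (entrywise) and MAE(Θ₁,Θ₂) = Σ_ω p_ω |Θ₁(ω) − Θ₂(ω)|. Then MAE(Θ̂, Θ) ≤ (1/(2H+1)) Σ_{π∈Π} MAE(sgn Ẑ_π, sgn(Θ − π)) + 1/H. -/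
lemma sgn_sum_close (H : ℕ) (hH : 1 ≤ H) (θ : ℝ) (hθ : θ ∈ Set.Icc (-1:ℝ) 1) :
    |(1 / (2 * (H:ℝ) + 1)) * (∑ h ∈ Finset.Icc (-(H:ℤ)) (H:ℤ), sgn (θ - (h:ℝ)/(H:ℝ))) - θ|
      ≤ 1/(H:ℝ) := by
  have hHr : (1:ℝ) ≤ H := by exact_mod_cast hH
  have hHpos : (0:ℝ) < H := by linarith
  have h2H : (0:ℝ) < 2*H+1 := by linarith
  set k := ⌊θ * H⌋ with hk
  have hk1 : (k:ℝ) ≤ θ * H := Int.floor_le _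
  have hk2 : θ * H < k + 1 := Int.lt_floor_add_one _
  have hkge : -(H:ℤ) ≤ k := by
    have h1 : ((-(H:ℤ) : ℤ) : ℝ) ≤ θ * H := by push_cast; nlinarith [hθ.1]
    exact Int.le_floor.mpr h1
  have hkle : k ≤ (H:ℤ) := by
    have h1 : θ * H ≤ ((H:ℤ):ℝ) := by push_cast; nlinarith [hθ.2]
    have := Int.floor_le_floor (R := ℝ) h1
    simpa using this.trans_eq (Int.floor_intCast _)
  have hkge' : -(H:ℝ) ≤ (k:ℝ) := by exact_mod_cast hkge
  have hkle' : (k:ℝ) ≤ (H:ℝ) := by exact_mod_cast hkle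
  have hsgn : ∀ h ∈ Finset.Icc (-(H:ℤ)) (H:ℤ),
      sgn (θ - (h:ℝ)/(H:ℝ)) = (if h ≤ k then (2:ℝ) else 0) - 1 := by
    intro h _
    unfold sgn
    by_cases hle : h ≤ k
    · have : (h:ℝ) ≤ θ * H := le_trans (by exact_mod_cast hle) hk1
      rw [if_pos hle, if_pos]
      · ring
      · rw [sub_nonneg, div_le_iff₀ hHpos]; linarith
    · have hlt : k + 1 ≤ h := by omega
      have : θ * H < (h:ℝ) := lt_of_lt_of_le hk2 (by exact_mod_cast hlt)
      rw [if_neg hle, if_neg]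
      · ring
      · rw [not_le, sub_neg, lt_div_iff₀ hHpos]; linarith
  have hfilter : Finset.filter (fun h => h ≤ k) (Finset.Icc (-(H:ℤ)) (H:ℤ))
      = Finset.Icc (-(H:ℤ)) k := by
    ext x; simp only [Finset.mem_filter, Finset.mem_Icc]; omega
  have c1 : ((Finset.Icc (-(H:ℤ)) k).card : ℝ) = (k:ℝ) + H + 1 := by
    rw [Int.card_Icc]
    have h0 : ((k + 1 - -(H:ℤ)).toNat : ℤ) = k + 1 - -(H:ℤ) := Int.toNat_of_nonneg (by omega)
    have := congrArg (fun z : ℤ => (z:ℝ)) h0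
    push_cast at this
    linarith
  have c2 : ((Finset.Icc (-(H:ℤ)) (H:ℤ)).card : ℝ) = 2*(H:ℝ) + 1 := by
    rw [Int.card_Icc]
    have h0 : (((H:ℤ) + 1 - -(H:ℤ)).toNat : ℤ) = (H:ℤ) + 1 - -(H:ℤ) :=
      Int.toNat_of_nonneg (by omega)
    have := congrArg (fun z : ℤ => (z:ℝ)) h0
    push_cast at this
    linarith
  have hsum : ∑ h ∈ Finset.Icc (-(H:ℤ)) (H:ℤ), sgn (θ - (h:ℝ)/(H:ℝ))
      = 2 * (k:ℝ) + 1 := by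
    rw [Finset.sum_congr rfl hsgn, Finset.sum_sub_distrib, Finset.sum_ite,
      Finset.sum_const, Finset.sum_const, Finset.sum_const, hfilter]
    simp only [smul_eq_mul, mul_zero, add_zero, mul_one, nsmul_eq_mul]
    rw [c1, c2]; ring
  rw [hsum, abs_le]
  constructor
  · rw [neg_le, neg_sub]
    rw [← sub_nonneg]
    have key : 1/(H:ℝ) - (θ - 1 / (2 * H + 1) * (2 * k + 1))
        = ((2*(H:ℝ)+1) - θ*H*(2*H+1) + (2*k+1)*H) / (H*(2*H+1)) := by
      field_simp; ring
    rw [key]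
    apply div_nonneg _ (by positivity)
    nlinarith [hk2, hkle', mul_lt_mul_of_pos_right hk2 h2H]
  · rw [← sub_nonneg]
    have key : 1/(H:ℝ) - (1 / (2 * H + 1) * (2 * k + 1) - θ)
        = ((2*(H:ℝ)+1) - (2*k+1)*H + θ*H*(2*H+1)) / (H*(2*H+1)) := by
      field_simp; ring
    rw [key]
    apply div_nonneg _ (by positivity)
    nlinarith [hk1, hkge', mul_le_mul_of_nonneg_right hk1 (le_of_lt h2H)]

/-- for the sign-series estimate
`Θ̂ = (1/(2H+1)) Σ_{π ∈ Π} sgn(Ẑ_π)` over the level grid `Π = {h/H : −H ≤ h ≤ H}`,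
`MAE(Θ̂, Θ) ≤ (1/(2H+1)) Σ_{π ∈ Π} MAE(sgn Ẑ_π, sgn(Θ − π)) + 1/H`. -/
theorem stmt18 {Ω : Type*} [Fintype Ω] (H : ℕ) (hH : 1 ≤ H)
    (p : Ω → ℝ) (hp0 : ∀ ω, 0 ≤ p ω) (hp1 : ∑ ω, p ω = 1)
    (Θ : Ω → ℝ) (hΘ : ∀ ω, Θ ω ∈ Set.Icc (-1 : ℝ) 1)
    (Zhat : ℤ → Ω → ℝ) (Θhat : Ω → ℝ)
    (hΘhat : ∀ ω, Θhat ω = (1 / (2 * (H : ℝ) + 1)) *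
      ∑ h ∈ Finset.Icc (-(H : ℤ)) (H : ℤ), sgn (Zhat h ω)) :
    MAE p Θhat Θ ≤
      (1 / (2 * (H : ℝ) + 1)) *
        (∑ h ∈ Finset.Icc (-(H : ℤ)) (H : ℤ),
          MAE p (fun ω => sgn (Zhat h ω)) (fun ω => sgn (Θ ω - (h : ℝ) / (H : ℝ))))
      + 1 / (H : ℝ) := by
  have hHr : (1:ℝ) ≤ H := by exact_mod_cast hH
  have hHpos : (0:ℝ) < H := by linarith
  have h2H : (0:ℝ) < 2*H+1 := by linarith
  set c : ℝ := 1 / (2 * (H : ℝ) + 1) with hc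
  have hcpos : 0 ≤ c := by positivity
  -- pointwise bound
  have point : ∀ ω, |Θhat ω - Θ ω| ≤
      c * ∑ h ∈ Finset.Icc (-(H : ℤ)) (H : ℤ),
        |sgn (Zhat h ω) - sgn (Θ ω - (h : ℝ) / (H : ℝ))| + 1 / (H:ℝ) := by
    intro ω
    have tri : |Θhat ω - Θ ω| ≤
        |Θhat ω - c * ∑ h ∈ Finset.Icc (-(H : ℤ)) (H : ℤ), sgn (Θ ω - (h:ℝ)/(H:ℝ))| +
        |c * (∑ h ∈ Finset.Icc (-(H : ℤ)) (H : ℤ), sgn (Θ ω - (h:ℝ)/(H:ℝ))) - Θ ω| := by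
      have heq : Θhat ω - Θ ω = (Θhat ω - c * ∑ h ∈ Finset.Icc (-(H : ℤ)) (H : ℤ),
              sgn (Θ ω - (h:ℝ)/(H:ℝ))) +
            (c * (∑ h ∈ Finset.Icc (-(H : ℤ)) (H : ℤ), sgn (Θ ω - (h:ℝ)/(H:ℝ))) - Θ ω) := by
        ring
      rw [heq]; exact abs_add_le _ _
    have hclose := sgn_sum_close H hH (Θ ω) (hΘ ω)
    rw [← hc] at hclose
    refine tri.trans (add_le_add ?_ hclose)
    rw [hΘhat ω, ← mul_sub, ← Finset.sum_sub_distrib, abs_mul, abs_of_nonneg hcpos]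
    exact mul_le_mul_of_nonneg_left (Finset.abs_sum_le_sum_abs _ _) hcpos
  -- sum it up
  unfold MAE
  calc ∑ ω, p ω * |Θhat ω - Θ ω|
      ≤ ∑ ω, p ω * (c * ∑ h ∈ Finset.Icc (-(H : ℤ)) (H : ℤ),
          |sgn (Zhat h ω) - sgn (Θ ω - (h : ℝ) / (H : ℝ))| + 1 / (H:ℝ)) := by
        exact Finset.sum_le_sum fun ω _ =>
          mul_le_mul_of_nonneg_left (point ω) (hp0 ω)
    _ = (∑ ω, ∑ h ∈ Finset.Icc (-(H : ℤ)) (H : ℤ),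
          c * (p ω * |sgn (Zhat h ω) - sgn (Θ ω - (h : ℝ) / (H : ℝ))|)) + 1/(H:ℝ) := by
        simp only [mul_add, Finset.sum_add_distrib, ← Finset.sum_mul, hp1, one_mul]
        congr 1
        refine Finset.sum_congr rfl fun ω _ => ?_
        rw [Finset.mul_sum, Finset.mul_sum]
        exact Finset.sum_congr rfl fun h _ => by ring
    _ = (∑ h ∈ Finset.Icc (-(H : ℤ)) (H : ℤ), ∑ ω,
          c * (p ω * |sgn (Zhat h ω) - sgn (Θ ω - (h : ℝ) / (H : ℝ))|)) + 1/(H:ℝ) := by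
        rw [Finset.sum_comm]
    _ = _ := by
        rw [Finset.mul_sum]
        congr 1
        exact Finset.sum_congr rfl fun h _ => by rw [Finset.mul_sum]
end
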